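/- Let Δ₂ be the convex hull of {(−2,0),(2,0),(0,1),(0,−1)} in ℝ², let k ≥ 1 be an integer, and let g : kΔ₂ → ℝ be a continuous concave function. Then Σ_{p ∈ kΔ₂ ∩ ℤ²} g(p) − ∫_{kΔ₂} g dA ≤ (1/2)·Σ_{p ∈ ∂(kΔ₂) ∩ ℤ²} g(p) − (1/6)·(g(0,k) + g(0,−k)) + (1/6)·(g(2k,0) + g(−2k,0)) + (1/3)·(g(k,0) + g(−k,0)) + (1/3)·g(0,0). -/

import Mathlib

open MeasureTheory Pointwise intervalIntegral Classical

noncomputable section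

/-- The lattice points of `ℝ²`: points with integer coordinates. -/
def lat : Set (ℝ × ℝ) := {x | ∃ m n : ℤ, x = ((m : ℝ), (n : ℝ))}

/-- The moment polytope of `X₂ = (ℙ¹×ℙ¹)/(ℤ/4ℤ)` polarized by `-2K`. -/
def Δ₂ : Set (ℝ × ℝ) := convexHull ℝ {((-2 : ℝ), (0 : ℝ)), (2, 0), (0, 1), (0, -1)}

namespace SubX2


def P (K : ℝ) : Set (ℝ × ℝ) := {p | |p.1| + 2 * |p.2| ≤ 2 * K}

lemma mem_P {K : ℝ} {p : ℝ × ℝ} : p ∈ P K ↔ |p.1| + 2 * |p.2| ≤ 2 * K := Iff.rfl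

lemma convex_P (K : ℝ) : Convex ℝ (P K) := by
  intro p hp q hq a b ha hb hab
  simp only [mem_P] at *
  have e1 : (a • p + b • q).1 = a * p.1 + b * q.1 := rfl
  have e2 : (a • p + b • q).2 = a * p.2 + b * q.2 := rfl
  rw [e1, e2]
  have h1 : |a * p.1 + b * q.1| ≤ a * |p.1| + b * |q.1| := by
    calc |a * p.1 + b * q.1| ≤ |a * p.1| + |b * q.1| := abs_add_le _ _
    _ = a * |p.1| + b * |q.1| := by
        rw [abs_mul, abs_mul, abs_of_nonneg ha, abs_of_nonneg hb]
  have h2 : |a * p.2 + b * q.2| ≤ a * |p.2| + b * |q.2| := by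
    calc |a * p.2 + b * q.2| ≤ |a * p.2| + |b * q.2| := abs_add_le _ _
    _ = a * |p.2| + b * |q.2| := by
        rw [abs_mul, abs_mul, abs_of_nonneg ha, abs_of_nonneg hb]
  have hs : a * (2*K) + b * (2*K) = 2 * K := by
    have : a * (2*K) + b * (2*K) = (a+b) * (2*K) := by ring
    rw [this, hab, one_mul]
  linarith [mul_le_mul_of_nonneg_left hp ha, mul_le_mul_of_nonneg_left hq hb]

lemma isClosed_P (K : ℝ) : IsClosed (P K) := by
  have : P K = (fun p : ℝ × ℝ => |p.1| + 2 * |p.2|) ⁻¹' (Set.Iic (2 * K)) := rfl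
  rw [this]
  exact IsClosed.preimage (by fun_prop) isClosed_Iic

lemma cont_f : Continuous (fun p : ℝ × ℝ => |p.1| + 2 * |p.2|) := by fun_prop

lemma isCompact_P (K : ℝ) : IsCompact (P K) := by
  have hb : Bornology.IsBounded (P K) := by
    rw [Metric.isBounded_iff_subset_closedBall 0]
    refine ⟨2 * |K| + 2, fun p hp => ?_⟩
    simp only [mem_P] at hp
    have h1 : |p.1| ≤ 2 * |K| := by
      have := abs_nonneg p.2
      have := le_abs_self K
      linarith
    have h2 : |p.2| ≤ 2 * |K| := by
      have := abs_nonneg p.1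
      have := le_abs_self K
      linarith
    simp only [Metric.mem_closedBall, dist_zero_right, Prod.norm_def, max_le_iff,
      Real.norm_eq_abs]
    constructor <;> linarith [abs_nonneg p.1, abs_nonneg p.2, abs_nonneg K]
  exact Metric.isCompact_of_isClosed_isBounded (isClosed_P K) hb

lemma smul_hull_eq (K : ℝ) (hK : 0 ≤ K) : K • Δ₂ = P K := by
  have h1 : K • Δ₂ = convexHull ℝ (K • {((-2 : ℝ), (0 : ℝ)), (2, 0), (0, 1), (0, -1)}) := by
    rw [Δ₂, convexHull_smul]
  have h2 : K • ({((-2 : ℝ), (0 : ℝ)), (2, 0), (0, 1), (0, -1)} : Set (ℝ × ℝ)) =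
      {((-2 * K : ℝ), (0 : ℝ)), (2 * K, 0), (0, K), (0, -K)} := by
    simp only [Set.smul_set_insert, Set.smul_set_singleton, Prod.smul_mk, smul_eq_mul]
    norm_num [mul_comm]
  rw [h1, h2]
  apply le_antisymm
  · apply convexHull_min _ (convex_P K)
    intro p hp
    simp only [Set.mem_insert_iff, Set.mem_singleton_iff] at hp
    rcases hp with h | h | h | h <;> subst h <;>
      simp [mem_P, abs_of_nonneg hK, abs_mul] <;> nlinarith [hK]
  · rcases eq_or_lt_of_le hK with h0 | hKpos
    · intro p hp
      simp only [mem_P, ← h0] at hp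
      have h1 : p.1 = 0 := by
        have := abs_nonneg p.1; have := abs_nonneg p.2
        have : |p.1| = 0 := by linarith
        exact abs_eq_zero.mp this
      have h2 : p.2 = 0 := by
        have := abs_nonneg p.1; have := abs_nonneg p.2
        have : |p.2| = 0 := by linarith
        exact abs_eq_zero.mp this
      have : p = ((-2 * K : ℝ), (0 : ℝ)) := by
        rw [← h0] at *; ext <;> simp [h1, h2]
      rw [this]
      exact subset_convexHull ℝ _ (by simp)
    · intro p hp
      simp only [mem_P] at hp
      obtain ⟨x, y⟩ := p
      simp only at hp
      -- vertex on y side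
      set V : ℝ × ℝ := if 0 ≤ y then (0, K) else (0, -K) with hV
      have hVmem : V ∈ convexHull ℝ ({((-2 * K : ℝ), (0 : ℝ)), (2 * K, 0), (0, K), (0, -K)} : Set (ℝ × ℝ)) := by
        apply subset_convexHull
        by_cases h : 0 ≤ y <;> simp [hV, h]
      set t : ℝ := |y| / K with ht
      have ht0 : 0 ≤ t := div_nonneg (abs_nonneg y) hK
      have ht1 : t ≤ 1 := by
        rw [div_le_one hKpos]
        have := abs_nonneg x
        linarith
      rcases eq_or_lt_of_le ht1 with htop | hlt
    -- t = 1 : x = 0, point is vertex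
      · have hyK : |y| = K := by
          rw [ht, div_eq_one_iff_eq hKpos.ne'] at htop; exact htop
        have hx0 : x = 0 := by
          have := abs_nonneg x
          have : |x| = 0 := by linarith
          exact abs_eq_zero.mp this
        have : (x, y) = V := by
          by_cases h : 0 ≤ y
          · have hy : y = K := by rw [abs_of_nonneg h] at hyK; exact hyK
            simp only [hV, if_pos h, hx0, hy]
            rw [if_pos hK]
          · have hy : y = -K := by rw [abs_of_neg (lt_of_not_ge h)] at hyK; linarith
            simp only [hV, if_neg h, hx0, hy]
            rw [if_neg (by linarith : ¬ (0:ℝ) ≤ -K)]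
        rw [this]; exact hVmem
      · -- t < 1
        set b : ℝ := x / (1 - t) with hb
        have h1t : (0:ℝ) < 1 - t := by linarith
        have hbB : |b| ≤ 2 * K := by
          rw [hb, abs_div, abs_of_pos h1t, div_le_iff₀ h1t]
          have : |y| = t * K := by rw [ht]; field_simp
          nlinarith
        have hBmem : ((b, 0) : ℝ × ℝ) ∈ convexHull ℝ
            ({((-2 * K : ℝ), (0 : ℝ)), (2 * K, 0), (0, K), (0, -K)} : Set (ℝ × ℝ)) := by
          have : ((b,0) : ℝ × ℝ) ∈ segment ℝ ((-2*K, 0) : ℝ × ℝ) ((2*K, 0) : ℝ × ℝ) := by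
            refine ⟨(1 - b / (2*K))/2, (1 + b / (2*K))/2, ?_, ?_, by ring, ?_⟩
            · have : b / (2*K) ≤ 1 := by
                rw [div_le_one (by linarith)]
                calc b ≤ |b| := le_abs_self b
                _ ≤ 2 * K := hbB
              linarith
            · have : -1 ≤ b / (2*K) := by
                rw [le_div_iff₀ (by linarith)]
                calc (-1) * (2*K) = -(2*K) := by ring
                _ ≤ -|b| := by linarith
                _ ≤ b := neg_abs_le b
              linarith
            · have hKne : (2*K) ≠ 0 := by positivity
              ext
              · show (1 - b / (2*K))/2 * (-2*K) + (1 + b / (2*K))/2 * (2*K) = b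
                field_simp
                ring
              · show (1 - b / (2*K))/2 * 0 + (1 + b / (2*K))/2 * 0 = 0
                ring
          exact segment_subset_convexHull (by simp) (by simp) this
        have : ((x, y) : ℝ × ℝ) ∈ segment ℝ V ((b,0) : ℝ × ℝ) := by
          refine ⟨t, 1 - t, ht0, by linarith, by ring, ?_⟩
          have hyt : t * K = |y| := by rw [ht]; field_simp
          by_cases h : 0 ≤ y
          · simp only [hV, if_pos h]
            ext
            · show t * 0 + (1-t) * b = x
              rw [hb]; field_simp; ring
            · show t * K + (1-t) * 0 = y
              rw [hyt, abs_of_nonneg h]; ring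
          · simp only [hV, if_neg h]
            ext
            · show t * 0 + (1-t) * b = x
              rw [hb]; field_simp; ring
            · show t * (-K) + (1-t) * 0 = y
              have : t * K = -y := by rw [hyt, abs_of_neg (lt_of_not_ge h)]
              linarith
        exact (convex_convexHull ℝ _).segment_subset hVmem hBmem this



lemma interior_P (K : ℝ) (hK : 0 < K) :
    interior (P K) = {p : ℝ × ℝ | |p.1| + 2 * |p.2| < 2 * K} := by
  apply subset_antisymm
  · intro p hp
    by_contra hcon
    have hle := interior_subset hp
    simp only [P, Set.mem_setOf_eq] at hle
    have heq : |p.1| + 2 * |p.2| = 2 * K := by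
      simp only [Set.mem_setOf_eq, not_lt] at hcon
      linarith
    rw [mem_interior_iff_mem_nhds, Metric.mem_nhds_iff] at hp
    obtain ⟨ε, hε, hball⟩ := hp
    have hpnorm : 0 < ‖p‖ := by
      rw [norm_pos_iff]
      intro h0
      rw [h0] at heq
      simp at heq
      linarith
    set δ : ℝ := ε / (2 * ‖p‖) with hδ
    have hδ0 : 0 < δ := by positivity
    have hq : (1 + δ) • p ∈ Metric.ball p ε := by
      simp only [Metric.mem_ball, dist_eq_norm]
      have : (1 + δ) • p - p = δ • p := by
        rw [add_smul, one_smul]; abel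
      rw [this, norm_smul, Real.norm_eq_abs, abs_of_pos hδ0, hδ]
      rw [div_mul_eq_mul_div, mul_comm]
      rw [div_lt_iff₀ (by positivity)]
      nlinarith [hpnorm, hε]
    have hqP := hball hq
    simp only [P, Set.mem_setOf_eq] at hqP
    have e1 : ((1 + δ) • p).1 = (1 + δ) * p.1 := rfl
    have e2 : ((1 + δ) • p).2 = (1 + δ) * p.2 := rfl
    rw [e1, e2, abs_mul, abs_mul, abs_of_pos (by linarith : (0:ℝ) < 1 + δ)] at hqP
    nlinarith [hqP, heq, hδ0, hK]
  · apply interior_maximal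
    · intro p hp
      simp only [Set.mem_setOf_eq] at hp
      exact le_of_lt hp
    · have : {p : ℝ × ℝ | |p.1| + 2 * |p.2| < 2 * K} =
        (fun p : ℝ × ℝ => |p.1| + 2 * |p.2|) ⁻¹' (Set.Iio (2 * K)) := rfl
      rw [this]
      exact IsOpen.preimage (by fun_prop) isOpen_Iio

lemma frontier_P (K : ℝ) (hK : 0 < K) :
    frontier (P K) = {p : ℝ × ℝ | |p.1| + 2 * |p.2| = 2 * K} := by
  rw [frontier, (isClosed_P K).closure_eq, interior_P K hK]
  ext p
  simp only [Set.mem_diff, Set.mem_setOf_eq, P, not_lt]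
  constructor
  · rintro ⟨h1, h2⟩; linarith
  · intro h; exact ⟨le_of_eq h, le_of_eq h.symm⟩


variable (k : ℕ)

def w (k : ℕ) (n : ℤ) : ℤ := 2 * k - 2 * |n|

noncomputable def rowF (n : ℤ) : Finset (ℝ × ℝ) :=
  (Finset.Icc (-(w k n)) (w k n)).image (fun m : ℤ => ((m : ℝ), (n : ℝ)))

noncomputable def rowB (n : ℤ) : Finset (ℝ × ℝ) :=
  ({-(w k n), w k n} : Finset ℤ).image (fun m : ℤ => ((m : ℝ), (n : ℝ)))

noncomputable def Tfull : Finset (ℝ × ℝ) := (Finset.Icc (-(k : ℤ)) k).biUnion (rowF k)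
noncomputable def Tbd : Finset (ℝ × ℝ) := (Finset.Icc (-(k : ℤ)) k).biUnion (rowB k)

lemma cast_inj_row (n : ℤ) : Set.InjOn (fun m : ℤ => ((m : ℝ), (n : ℝ))) ↑(Finset.Icc (-(w k n)) (w k n)) := by
  intro a _ b _ h
  simp only [Prod.mk.injEq] at h
  exact_mod_cast h.1

lemma rows_disjoint (f : ℕ → ℤ → Finset (ℝ × ℝ))
    (hf : ∀ n p, p ∈ f k n → p.2 = (n : ℝ)) :
    (↑(Finset.Icc (-(k : ℤ)) k) : Set ℤ).PairwiseDisjoint (f k) := by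
  intro n1 _ n2 _ hne
  simp only [Finset.disjoint_left]
  intro p h1 h2
  exact hne (by exact_mod_cast (hf n1 p h1).symm.trans (hf n2 p h2))

lemma coe_Tfull : (↑(Tfull k) : Set (ℝ × ℝ)) = P k ∩ lat := by
  ext p
  simp only [Tfull, rowF, Finset.coe_biUnion, Set.mem_iUnion, Finset.mem_coe,
    Finset.mem_image, Finset.mem_Icc, P, lat, Set.mem_inter_iff, Set.mem_setOf_eq]
  constructor
  · rintro ⟨n, hn, m, hm, rfl⟩
    refine ⟨?_, m, n, rfl⟩
    have h1 : |(m:ℝ)| = ((|m| : ℤ) : ℝ) := by push_cast; rfl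
    have h2 : |(n:ℝ)| = ((|n| : ℤ) : ℝ) := by push_cast; rfl
    rw [h1, h2]
    have : |m| + 2 * |n| ≤ 2 * (k : ℤ) := by
      simp only [w] at hm
      simp only [Int.abs_eq_natAbs] at hm ⊢
      omega
    exact_mod_cast this
  · rintro ⟨hP, m, n, rfl⟩
    simp only at hP
    have h1 : |(m:ℝ)| = ((|m| : ℤ) : ℝ) := by push_cast; rfl
    have h2 : |(n:ℝ)| = ((|n| : ℤ) : ℝ) := by push_cast; rfl
    rw [h1, h2] at hP
    have hP' : |m| + 2 * |n| ≤ 2 * (k : ℤ) := by exact_mod_cast hP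
    refine ⟨n, ?_, m, ?_, rfl⟩
    · simp only [Int.abs_eq_natAbs] at hP'; omega
    · simp only [Finset.mem_Icc, w]
      simp only [Int.abs_eq_natAbs] at hP' ⊢; omega

lemma coe_Tbd (hk : 1 ≤ k) : (↑(Tbd k) : Set (ℝ × ℝ)) = {p : ℝ × ℝ | |p.1| + 2 * |p.2| = 2 * k} ∩ lat := by
  ext p
  simp only [Tbd, rowB, Finset.coe_biUnion, Set.mem_iUnion, Finset.mem_coe,
    Finset.mem_image, Finset.mem_Icc, lat, Set.mem_inter_iff, Set.mem_setOf_eq,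
    Finset.mem_insert, Finset.mem_singleton]
  constructor
  · rintro ⟨n, hn, m, hm, rfl⟩
    refine ⟨?_, m, n, rfl⟩
    have h1 : |(m:ℝ)| = ((|m| : ℤ) : ℝ) := by push_cast; rfl
    have h2 : |(n:ℝ)| = ((|n| : ℤ) : ℝ) := by push_cast; rfl
    rw [h1, h2]
    have : |m| + 2 * |n| = 2 * (k : ℤ) := by
      simp only [w] at hm
      simp only [Int.abs_eq_natAbs] at hm ⊢
      rcases hm with h | h <;> omega
    exact_mod_cast this
  · rintro ⟨hP, m, n, rfl⟩
    simp only at hP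
    have h1 : |(m:ℝ)| = ((|m| : ℤ) : ℝ) := by push_cast; rfl
    have h2 : |(n:ℝ)| = ((|n| : ℤ) : ℝ) := by push_cast; rfl
    rw [h1, h2] at hP
    have hP' : |m| + 2 * |n| = 2 * (k : ℤ) := by exact_mod_cast hP
    refine ⟨n, ?_, m, ?_, rfl⟩
    · simp only [Int.abs_eq_natAbs] at hP'; omega
    · simp only [w]
      simp only [Int.abs_eq_natAbs] at hP' ⊢; omega

variable (g : ℝ × ℝ → ℝ)

noncomputable def Sfull : ℝ :=
  ∑ n ∈ Finset.Icc (-(k : ℤ)) k, ∑ m ∈ Finset.Icc (-(w k n)) (w k n), g ((m : ℝ), (n : ℝ))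

noncomputable def Sbd : ℝ :=
  ∑ n ∈ Finset.Icc (-(k : ℤ)) k, ∑ m ∈ ({-(w k n), w k n} : Finset ℤ), g ((m : ℝ), (n : ℝ))

lemma finsum_full : ∑ᶠ p ∈ P k ∩ lat, g p = Sfull k g := by
  rw [← coe_Tfull k, finsum_mem_coe_finset, Tfull, Finset.sum_biUnion]
  · apply Finset.sum_congr rfl
    intro n _
    rw [rowF, Finset.sum_image]
    intro a ha b hb h
    exact cast_inj_row k n ha hb h
  · exact rows_disjoint k rowF (fun n p hp => by
      simp only [rowF, Finset.mem_image] at hp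
      obtain ⟨m, _, rfl⟩ := hp
      rfl)

lemma finsum_bd (hk : 1 ≤ k) :
    ∑ᶠ p ∈ ({p : ℝ × ℝ | |p.1| + 2 * |p.2| = 2 * k} ∩ lat), g p = Sbd k g := by
  rw [← coe_Tbd k hk, finsum_mem_coe_finset, Tbd, Finset.sum_biUnion]
  · apply Finset.sum_congr rfl
    intro n _
    rw [rowB, Finset.sum_image]
    intro a ha b hb h
    simp only [Prod.mk.injEq] at h
    exact_mod_cast h.1
  · exact rows_disjoint k rowB (fun n p hp => by
      simp only [rowB, Finset.mem_image] at hp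
      obtain ⟨m, _, rfl⟩ := hp
      rfl)



lemma comb_pt (A B : ℝ × ℝ) (a b : ℝ) :
    a • A + b • B = ((a * A.1 + b * B.1, a * A.2 + b * B.2) : ℝ × ℝ) := rfl

lemma seg_mem {s : Set (ℝ × ℝ)} (hs : Convex ℝ s) {y L R : ℝ}
    (hL : ((L, y) : ℝ × ℝ) ∈ s) (hR : ((R, y) : ℝ × ℝ) ∈ s) :
    ∀ x ∈ Set.Icc L R, ((x, y) : ℝ × ℝ) ∈ s := by
  intro x hx
  rcases eq_or_lt_of_le (hx.1.trans hx.2) with h | h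
  · have hxL : x = L := le_antisymm (h ▸ hx.2) hx.1
    rwa [hxL]
  · have hRL : (0:ℝ) < R - L := by linarith
    have ha : (0:ℝ) ≤ (R - x)/(R - L) := by
      apply div_nonneg _ (le_of_lt hRL); linarith [hx.2]
    have hb : (0:ℝ) ≤ (x - L)/(R - L) := by
      apply div_nonneg _ (le_of_lt hRL); linarith [hx.1]
    have hab : (R - x)/(R - L) + (x - L)/(R - L) = 1 := by
      field_simp
      ring
    have := hs hL hR ha hb hab
    rw [comb_pt] at this
    simp only at this
    have e1 : (R - x)/(R - L) * L + (x - L)/(R - L) * R = x := by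
      field_simp; ring
    have e2 : (R - x)/(R - L) * y + (x - L)/(R - L) * y = y := by
      field_simp; ring
    rwa [e1, e2] at this

lemma concave_pt {s : Set (ℝ × ℝ)} {g : ℝ × ℝ → ℝ} (hc : ConcaveOn ℝ s g)
    {A B : ℝ × ℝ} (hA : A ∈ s) (hB : B ∈ s) {t : ℝ} (h0 : 0 ≤ t) (h1 : t ≤ 1) :
    (1 - t) * g A + t * g B ≤ g (((1 - t) * A.1 + t * B.1, (1 - t) * A.2 + t * B.2) : ℝ × ℝ) := by
  have := hc.2 hA hB (by linarith : (0:ℝ) ≤ 1 - t) h0 (by ring)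
  rw [comb_pt] at this
  simpa [smul_eq_mul] using this

/-- Trapezoid lower bound for concave functions along a horizontal slice. -/
lemma trap1d {s : Set (ℝ × ℝ)} (hs : Convex ℝ s) {g : ℝ × ℝ → ℝ}
    (hg : ContinuousOn g s) (hc : ConcaveOn ℝ s g) {y L R : ℝ} (hLR : L ≤ R)
    (hL : ((L, y) : ℝ × ℝ) ∈ s) (hR : ((R, y) : ℝ × ℝ) ∈ s) :
    (R - L) * (g (L, y) + g (R, y)) / 2 ≤ ∫ x in L..R, g (x, y) := by
  rcases eq_or_lt_of_le hLR with h | hlt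
  · subst h
    simp
  have hRL : (0:ℝ) < R - L := by linarith
  set c : ℝ := g (L, y) with hcdef
  set d : ℝ := (g (R, y) - g (L, y)) / (R - L) with hddef
  have hint_g : IntervalIntegrable (fun x => g (x, y)) volume L R := by
    apply ContinuousOn.intervalIntegrable
    rw [Set.uIcc_of_le hLR]
    apply hg.comp (Continuous.continuousOn (by fun_prop))
    intro x hx
    exact seg_mem hs hL hR x hx
  have hint_l : IntervalIntegrable (fun x => c + d * (x - L)) volume L R :=
    Continuous.intervalIntegrable (by continuity) L R
  have hmono : ∀ x ∈ Set.Icc L R, c + d * (x - L) ≤ g (x, y) := by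
    intro x hx
    set t : ℝ := (x - L) / (R - L) with htdef
    have h0 : 0 ≤ t := by apply div_nonneg _ (le_of_lt hRL); linarith [hx.1]
    have h1 : t ≤ 1 := by rw [div_le_one hRL]; linarith [hx.2]
    have := concave_pt hc hL hR h0 h1
    simp only at this
    have e1 : (1 - t) * L + t * R = x := by
      rw [htdef]; field_simp; ring
    have e2 : (1 - t) * y + t * y = y := by ring
    rw [e1, e2] at this
    have : (1 - t) * g (L, y) + t * g (R, y) ≤ g (x, y) := this
    have et : c + d * (x - L) = (1 - t) * g (L, y) + t * g (R, y) := by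
      rw [hcdef, hddef, htdef]
      field_simp
      ring
    linarith [et ▸ this]
  have hIineq := intervalIntegral.integral_mono_on hLR hint_l hint_g hmono
  have hIl : ∫ x in L..R, (c + d * (x - L)) = (R - L) * (g (L, y) + g (R, y)) / 2 := by
    have h1 : ∫ x in L..R, (c + d * (x - L)) =
        (∫ x in L..R, (c - d * L)) + ∫ x in L..R, d * x := by
      rw [← intervalIntegral.integral_add intervalIntegrable_const
        (Continuous.intervalIntegrable (by continuity) L R)]
      congr 1
      ext x
      ring
    rw [h1, intervalIntegral.integral_const, intervalIntegral.integral_const_mul,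
      integral_id, hcdef, hddef]
    have hne : R - L ≠ 0 := hRL.ne'
    simp only [smul_eq_mul]
    field_simp
    ring
  linarith [hIl ▸ hIineq]


/-! ### The staircase -/

def ee (s r : ℕ) : ℤ := if 2*s ≤ r ∧ r % 2 = 0 then 1 else 0
def pr (s r : ℕ) : ℤ := ((r:ℤ)+1)/2 + ee s r
def qr (s r : ℕ) : ℤ := (r:ℤ)/2 - ee s r

lemma pq_step (s r : ℕ) :
    (pr s (r+1) = pr s r + 1 ∧ qr s (r+1) = qr s r) ∨
    (pr s (r+1) = pr s r ∧ qr s (r+1) = qr s r + 1) := by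
  simp only [pr, qr, ee]
  split_ifs <;> push_cast <;> omega

lemma pr_nonneg (s r : ℕ) : 0 ≤ pr s r := by
  simp only [pr, ee]; split_ifs <;> omega

lemma qr_nonneg (s r : ℕ) (hs : 1 ≤ s) : 0 ≤ qr s r := by
  simp only [qr, ee]; split_ifs <;> omega

lemma pr_le (s r : ℕ) (hs : 1 ≤ s) (h : r ≤ 4*s-2) : pr s r ≤ 2*s := by
  simp only [pr, ee]; split_ifs <;> push_cast <;> omega

lemma qr_le (s r : ℕ) (hs : 1 ≤ s) (h : r ≤ 4*s-2) : qr s r ≤ 2*s-2 := by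
  simp only [qr, ee]; split_ifs <;> push_cast <;> omega

lemma pr_zero (s : ℕ) (hs : 1 ≤ s) : pr s 0 = 0 := by
  simp only [pr, ee]; split_ifs <;> omega

lemma qr_zero (s : ℕ) (hs : 1 ≤ s) : qr s 0 = 0 := by
  simp only [qr, ee]; split_ifs <;> omega

lemma pr_last (s : ℕ) (hs : 1 ≤ s) : pr s (4*s-2) = 2*s := by
  simp only [pr, ee]; split_ifs <;> push_cast <;> omega

lemma qr_last (s : ℕ) (hs : 1 ≤ s) : qr s (4*s-2) = 2*s-2 := by
  simp only [qr, ee]; split_ifs <;> push_cast <;> omega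

-- evaluation lemmas
lemma pr_even_lo (s i : ℕ) (h : i < s) : pr s (2*i) = i := by
  simp only [pr, ee]; split_ifs <;> push_cast <;> omega
lemma qr_even_lo (s i : ℕ) (h : i < s) : qr s (2*i) = i := by
  simp only [qr, ee]; split_ifs <;> push_cast <;> omega
lemma pr_odd_lo (s i : ℕ) (h : i < s) : pr s (2*i+1) = i+1 := by
  simp only [pr, ee]; split_ifs <;> push_cast <;> omega
lemma qr_odd_lo (s i : ℕ) (h : i < s) : qr s (2*i+1) = i := by
  simp only [qr, ee]; split_ifs <;> push_cast <;> omega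
lemma pr_even_hi (s v : ℕ) (hs : 1 ≤ s) (h : v ≤ s-1) : pr s (2*s+2*v) = s+1+v := by
  simp only [pr, ee]; split_ifs <;> push_cast <;> omega
lemma qr_even_hi (s v : ℕ) (hs : 1 ≤ s) (h : v ≤ s-1) : qr s (2*s+2*v) = s-1+v := by
  simp only [qr, ee]; split_ifs <;> push_cast <;> omega
lemma pr_odd_hi (s v : ℕ) (h : v ≤ s-1) : pr s (2*s+2*v+1) = s+1+v := by
  simp only [pr, ee]; split_ifs <;> push_cast <;> omega
lemma qr_odd_hi (s v : ℕ) (h : v ≤ s-1) : qr s (2*s+2*v+1) = s+v := by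
  simp only [qr, ee]; split_ifs <;> push_cast <;> omega

/-! ### helpers for range sums -/

lemma cat_sum (f : ℕ → ℝ) (m n : ℕ) :
    (∑ p ∈ Finset.range (m+n), f p) =
      (∑ p ∈ Finset.range m, f p) + ∑ u ∈ Finset.range n, f (m+u) := by
  induction n with
  | zero => simp
  | succ n ih =>
      rw [← Nat.add_assoc, Finset.sum_range_succ, ih, Finset.sum_range_succ]
      ring

lemma pair_sum (F : ℕ → ℝ) (n : ℕ) :
    (∑ r ∈ Finset.range (2*n), F r) = ∑ i ∈ Finset.range n, (F (2*i) + F (2*i+1)) := by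
  induction n with
  | zero => simp
  | succ n ih =>
      have h : 2*(n+1) = 2*n + 1 + 1 := by ring
      rw [h, Finset.sum_range_succ, Finset.sum_range_succ, ih, Finset.sum_range_succ]
      ring



/-! ### integral computations -/

lemma poly_int (c0 c1 c2 : ℝ) :
    ∫ t in (0:ℝ)..1, (c0 + c1 * t + c2 * t^2) = c0 + c1/2 + c2/3 := by
  have i1 : IntervalIntegrable (fun t : ℝ => c0) volume 0 1 :=
    Continuous.intervalIntegrable (by continuity) 0 1
  have i2 : IntervalIntegrable (fun t : ℝ => c1 * t) volume 0 1 :=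
    Continuous.intervalIntegrable (by continuity) 0 1
  have i3 : IntervalIntegrable (fun t : ℝ => c2 * t^2) volume 0 1 :=
    Continuous.intervalIntegrable (by continuity) 0 1
  rw [intervalIntegral.integral_add (i1.add i2) i3, intervalIntegral.integral_add i1 i2,
    intervalIntegral.integral_const, intervalIntegral.integral_const_mul,
    intervalIntegral.integral_const_mul, integral_id, integral_pow]
  norm_num
  ring

lemma prod_int (u v x y : ℝ) :
    ∫ t in (0:ℝ)..1, (((1-t)*u + t*v) * ((1-t)*x + t*y) / 2)
      = u*x/6 + (u*y + v*x)/12 + v*y/6 := by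
  have h : ∀ t : ℝ, ((1-t)*u + t*v) * ((1-t)*x + t*y) / 2
      = u*x/2 + ((u*y + v*x - 2*u*x)/2) * t + ((u*x + v*y - u*y - v*x)/2) * t^2 := by
    intro t; ring
  rw [intervalIntegral.integral_congr (g := fun t : ℝ =>
    u*x/2 + ((u*y + v*x - 2*u*x)/2) * t + ((u*x + v*y - u*y - v*x)/2) * t^2)
    (fun t _ => h t), poly_int]
  ring

/-! ### the staircase data -/

def DD (s r : ℕ) (t : ℝ) : ℝ := (1 - t) * ((pr s r : ℤ) : ℝ) + t * ((qr s r : ℤ) : ℝ)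

noncomputable def aa (G : ℝ × ℝ → ℝ) (j s : ℕ) (r : ℕ) : ℝ := G (((pr s r : ℤ) : ℝ), (j : ℝ))
noncomputable def bb (G : ℝ × ℝ → ℝ) (j s : ℕ) (r : ℕ) : ℝ := G (((qr s r : ℤ) : ℝ), (j : ℝ) + 1)

noncomputable def phi (G : ℝ × ℝ → ℝ) (j s : ℕ) (r : ℕ) (t : ℝ) : ℝ :=
  (1 - t) * aa G j s r + t * bb G j s r

noncomputable def Wf (G : ℝ × ℝ → ℝ) (j s : ℕ) (r : ℕ) (t : ℝ) : ℝ :=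
  (DD s (r+1) t - DD s r t) * (phi G j s r t + phi G j s (r+1) t) / 2

noncomputable def Wint (G : ℝ × ℝ → ℝ) (j s : ℕ) (r : ℕ) : ℝ :=
  ((pr s (r+1) - pr s r : ℤ) : ℝ) *
      ((aa G j s r + aa G j s (r+1))/6 + (bb G j s r + bb G j s (r+1))/12)
    + ((qr s (r+1) - qr s r : ℤ) : ℝ) *
      ((aa G j s r + aa G j s (r+1))/12 + (bb G j s r + bb G j s (r+1))/6)

lemma Wf_int (G : ℝ × ℝ → ℝ) (j s : ℕ) (r : ℕ) :
    ∫ t in (0:ℝ)..1, Wf G j s r t = Wint G j s r := by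
  have h1 : ∀ t : ℝ, Wf G j s r t =
      ((1-t) * ((pr s (r+1) - pr s r : ℤ) : ℝ) + t * ((qr s (r+1) - qr s r : ℤ) : ℝ)) *
        ((1-t) * (aa G j s r + aa G j s (r+1)) + t * (bb G j s r + bb G j s (r+1))) / 2 := by
    intro t
    simp only [Wf, DD, phi]
    push_cast
    ring
  rw [intervalIntegral.integral_congr (g := fun t : ℝ =>
      ((1-t) * ((pr s (r+1) - pr s r : ℤ) : ℝ) + t * ((qr s (r+1) - qr s r : ℤ) : ℝ)) *
        ((1-t) * (aa G j s r + aa G j s (r+1)) + t * (bb G j s r + bb G j s (r+1))) / 2)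
    (fun t _ => h1 t), prod_int]
  simp only [Wint]
  ring



lemma qrow (k j s : ℕ) (hk : k = j + s) (hs : 1 ≤ s) (G : ℝ × ℝ → ℝ)
    (hg : ContinuousOn G (P k)) (hc : ConcaveOn ℝ (P k) G)
    (t : ℝ) (ht0 : 0 ≤ t) (ht1 : t ≤ 1) :
    ∑ r ∈ Finset.range (4*s-2), Wf G j s r t
      ≤ ∫ x in (0:ℝ)..(2*(s:ℝ) - 2*t), G (x, (j:ℝ) + t) := by
  have hA : ∀ r, r ≤ 4*s-2 → (((pr s r : ℤ) : ℝ), (j : ℝ)) ∈ P (k : ℝ) := by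
    intro r hr
    rw [mem_P]
    simp only
    rw [abs_of_nonneg (by exact_mod_cast pr_nonneg s r), abs_of_nonneg (Nat.cast_nonneg j)]
    have h1 : ((pr s r : ℤ) : ℝ) ≤ 2*(s:ℝ) := by exact_mod_cast pr_le s r hs hr
    have h2 : (k:ℝ) = (j:ℝ) + (s:ℝ) := by rw [hk]; push_cast; ring
    linarith
  have hB : ∀ r, r ≤ 4*s-2 → (((qr s r : ℤ) : ℝ), (j : ℝ) + 1) ∈ P (k : ℝ) := by
    intro r hr
    rw [mem_P]
    simp only
    rw [abs_of_nonneg (by exact_mod_cast qr_nonneg s r hs),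
      abs_of_nonneg (by positivity : (0:ℝ) ≤ (j:ℝ) + 1)]
    have h1 : ((qr s r : ℤ) : ℝ) ≤ 2*(s:ℝ) - 2 := by
      have := qr_le s r hs hr
      have h2 : ((qr s r : ℤ) : ℝ) ≤ ((2*(s:ℤ) - 2 : ℤ) : ℝ) := by exact_mod_cast this
      push_cast at h2
      linarith
    have h2 : (k:ℝ) = (j:ℝ) + (s:ℝ) := by rw [hk]; push_cast; ring
    linarith
  have hD : ∀ r, r ≤ 4*s-2 → ((DD s r t, (j:ℝ) + t) : ℝ × ℝ) ∈ P (k : ℝ) := by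
    intro r hr
    have hmem := convex_P (k:ℝ) (hA r hr) (hB r hr) (by linarith : (0:ℝ) ≤ 1 - t) ht0
      (by ring : (1 - t) + t = 1)
    rw [comb_pt] at hmem
    simp only at hmem
    have e2 : (1-t) * (j:ℝ) + t * ((j:ℝ)+1) = (j:ℝ) + t := by ring
    rw [e2] at hmem
    exact hmem
  have hmono : ∀ r, DD s r t ≤ DD s (r+1) t := by
    intro r
    rcases pq_step s r with ⟨h1, h2⟩ | ⟨h1, h2⟩ <;>
      · simp only [DD, h1, h2]
        push_cast
        linarith
  have hadj : ∀ r, r < 4*s-2 → IntervalIntegrable (fun x => G (x, (j:ℝ)+t)) volume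
      (DD s r t) (DD s (r+1) t) := by
    intro r hr
    apply ContinuousOn.intervalIntegrable
    rw [Set.uIcc_of_le (hmono r)]
    apply hg.comp (Continuous.continuousOn (by continuity))
    intro x hx
    exact seg_mem (convex_P _) (hD r (by omega)) (hD (r+1) (by omega)) x hx
  have hphi : ∀ r, r ≤ 4*s-2 → phi G j s r t ≤ G (DD s r t, (j:ℝ) + t) := by
    intro r hr
    have := concave_pt hc (hA r hr) (hB r hr) ht0 ht1
    simp only at this
    have e2 : (1-t) * (j:ℝ) + t * ((j:ℝ)+1) = (j:ℝ) + t := by ring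
    rw [e2] at this
    exact this
  have hstep : ∀ r, r < 4*s-2 → Wf G j s r t ≤
      ∫ x in (DD s r t)..(DD s (r+1) t), G (x, (j:ℝ)+t) := by
    intro r hr
    have hT := trap1d (convex_P (k:ℝ)) hg hc (hmono r) (hD r (by omega)) (hD (r+1) (by omega))
    refine le_trans ?_ hT
    have h1 := hphi r (by omega)
    have h2 := hphi (r+1) (by omega)
    have h3 : 0 ≤ DD s (r+1) t - DD s r t := by linarith [hmono r]
    have h4 := mul_le_mul_of_nonneg_left (add_le_add h1 h2) h3
    simp only [Wf]
    linarith
  calc ∑ r ∈ Finset.range (4*s-2), Wf G j s r t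
      ≤ ∑ r ∈ Finset.range (4*s-2), ∫ x in (DD s r t)..(DD s (r+1) t), G (x, (j:ℝ)+t) :=
        Finset.sum_le_sum (fun r hr => hstep r (Finset.mem_range.mp hr))
    _ = ∫ x in (DD s 0 t)..(DD s (4*s-2) t), G (x, (j:ℝ)+t) :=
        intervalIntegral.sum_integral_adjacent_intervals
          (fun r hr => hadj r hr)
    _ = ∫ x in (0:ℝ)..(2*(s:ℝ) - 2*t), G (x, (j:ℝ)+t) := by
        have e0 : DD s 0 t = 0 := by
          simp [DD, pr_zero s hs, qr_zero s hs]
        have e1 : DD s (4*s-2) t = 2*(s:ℝ) - 2*t := by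
          rw [DD, pr_last s hs, qr_last s hs]
          push_cast
          ring
        rw [e0, e1]



lemma W_even_lo (G : ℝ × ℝ → ℝ) (j s i : ℕ) (h : i < s) :
    Wint G j s (2*i) =
      (G ((i:ℝ), (j:ℝ)) + G (((i+1:ℕ):ℝ), (j:ℝ)))/6 + G ((i:ℝ), (j:ℝ)+1)/6 := by
  simp only [Wint, aa, bb]
  rw [pr_even_lo s i h, qr_even_lo s i h, pr_odd_lo s i h, qr_odd_lo s i h]
  push_cast
  ring

lemma W_odd_lo (G : ℝ × ℝ → ℝ) (j s i : ℕ) (h : i+1 < s) :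
    Wint G j s (2*i+1) =
      G (((i+1:ℕ):ℝ), (j:ℝ))/6 + (G ((i:ℝ), (j:ℝ)+1) + G (((i+1:ℕ):ℝ), (j:ℝ)+1))/6 := by
  simp only [Wint, aa, bb]
  rw [show 2*i+1+1 = 2*(i+1) from by ring]
  rw [pr_odd_lo s i (by omega), qr_odd_lo s i (by omega),
    pr_even_lo s (i+1) h, qr_even_lo s (i+1) h]
  push_cast
  ring

lemma W_defect (G : ℝ × ℝ → ℝ) (j s' : ℕ) :
    Wint G j (s'+1) (2*s'+1) =
      (G (((s'+1:ℕ):ℝ), (j:ℝ)) + G (((s'+2:ℕ):ℝ), (j:ℝ)))/6 + G ((s':ℝ), (j:ℝ)+1)/6 := by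
  simp only [Wint, aa, bb]
  rw [show 2*s'+1+1 = 2*(s'+1)+2*0 from by ring]
  rw [pr_odd_lo (s'+1) s' (by omega), qr_odd_lo (s'+1) s' (by omega),
    pr_even_hi (s'+1) 0 (by omega) (by omega), qr_even_hi (s'+1) 0 (by omega) (by omega)]
  push_cast
  ring

lemma W_even_hi (G : ℝ × ℝ → ℝ) (j s' v : ℕ) (h : v < s') :
    Wint G j (s'+1) (2*(s'+1)+2*v) =
      G (((s'+2+v:ℕ):ℝ), (j:ℝ))/6
        + (G (((s'+v:ℕ):ℝ), (j:ℝ)+1) + G (((s'+1+v:ℕ):ℝ), (j:ℝ)+1))/6 := by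
  simp only [Wint, aa, bb]
  rw [pr_even_hi (s'+1) v (by omega) (by omega), qr_even_hi (s'+1) v (by omega) (by omega),
    pr_odd_hi (s'+1) v (by omega), qr_odd_hi (s'+1) v (by omega)]
  push_cast
  ring

lemma W_odd_hi (G : ℝ × ℝ → ℝ) (j s' v : ℕ) (h : v < s') :
    Wint G j (s'+1) (2*(s'+1)+2*v+1) =
      (G (((s'+2+v:ℕ):ℝ), (j:ℝ)) + G (((s'+3+v:ℕ):ℝ), (j:ℝ)))/6
        + G (((s'+1+v:ℕ):ℝ), (j:ℝ)+1)/6 := by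
  simp only [Wint, aa, bb]
  rw [show 2*(s'+1)+2*v+1+1 = 2*(s'+1)+2*(v+1) from by ring]
  rw [pr_odd_hi (s'+1) v (by omega), qr_odd_hi (s'+1) v (by omega),
    pr_even_hi (s'+1) (v+1) (by omega) (by omega), qr_even_hi (s'+1) (v+1) (by omega) (by omega)]
  push_cast
  ring

lemma row_combine (s' : ℕ) (A B : ℕ → ℝ) :
    (∑ i ∈ Finset.range s',
        ((A i + A (i+1))/6 + B i/6 + (A (i+1)/6 + (B i + B (i+1))/6)))
      + ((A s' + A (s'+1))/6 + B s'/6 + ((A (s'+1) + A (s'+2))/6 + B s'/6))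
      + ∑ v ∈ Finset.range s',
          (A (s'+2+v)/6 + (B (s'+v) + B (s'+1+v))/6
            + ((A (s'+2+v) + A (s'+3+v))/6 + B (s'+1+v)/6))
    = (1/6) * (3 * (∑ p ∈ Finset.range (2*s'+3), A p)
        + 3 * (∑ q ∈ Finset.range (2*s'+1), B q)
        - 2*A 0 - A (s'+1) - 2*A (2*s'+2) - B 0 + B s' - B (2*s')) := by
  have c1 : ∑ p ∈ Finset.range (2*s'+3), A p
      = (∑ p ∈ Finset.range (s'+2), A p) + ∑ u ∈ Finset.range (s'+1), A (s'+2+u) := by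
    rw [show 2*s'+3 = (s'+2)+(s'+1) from by omega, cat_sum]
  have c2 : ∑ p ∈ Finset.range (s'+2), A p
      = (∑ p ∈ Finset.range s', A p) + A s' + A (s'+1) := by
    rw [Finset.sum_range_succ, Finset.sum_range_succ]
  have c3 : ∑ u ∈ Finset.range (s'+1), A (s'+2+u)
      = (∑ u ∈ Finset.range s', A (s'+2+u)) + A (2*s'+2) := by
    rw [Finset.sum_range_succ, show s'+2+s' = 2*s'+2 from by omega]
  have c4 : ∑ i ∈ Finset.range s', A (i+1)
      = (∑ p ∈ Finset.range s', A p) + A s' - A 0 := by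
    have h1 := Finset.sum_range_succ' A s'
    have h2 := Finset.sum_range_succ A s'
    linarith
  have c5 : ∑ v ∈ Finset.range s', A (s'+3+v)
      = (∑ v ∈ Finset.range s', A (s'+2+v)) + A (2*s'+2) - A (s'+2) := by
    have h1 := Finset.sum_range_succ' (fun u => A (s'+2+u)) s'
    have h2 := Finset.sum_range_succ (fun u => A (s'+2+u)) s'
    rw [Finset.sum_congr rfl (fun v _ => by
      rw [show s'+2+(v+1) = s'+3+v from by omega] : ∀ x ∈ Finset.range s',
        A (s'+2+(x+1)) = A (s'+3+x))] at h1
    rw [show s'+2+s' = 2*s'+2 from by omega] at h2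
    rw [show s'+2+0 = s'+2 from by omega] at h1
    linarith
  have d1 : ∑ q ∈ Finset.range (2*s'+1), B q
      = (∑ q ∈ Finset.range s', B q) + ((∑ u ∈ Finset.range s', B (s'+u)) + B (2*s')) := by
    rw [show 2*s'+1 = s'+(s'+1) from by omega, cat_sum, Finset.sum_range_succ,
      show s'+s' = 2*s' from by omega]
  have d4 : ∑ i ∈ Finset.range s', B (i+1)
      = (∑ q ∈ Finset.range s', B q) + B s' - B 0 := by
    have h1 := Finset.sum_range_succ' B s'
    have h2 := Finset.sum_range_succ B s'
    linarith
  have d5 : ∑ v ∈ Finset.range s', B (s'+1+v)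
      = (∑ v ∈ Finset.range s', B (s'+v)) + B (2*s') - B s' := by
    have h1 := Finset.sum_range_succ' (fun u => B (s'+u)) s'
    have h2 := Finset.sum_range_succ (fun u => B (s'+u)) s'
    rw [Finset.sum_congr rfl (fun v _ => by
      rw [show s'+(v+1) = s'+1+v from by omega] : ∀ x ∈ Finset.range s',
        B (s'+(x+1)) = B (s'+1+x))] at h1
    rw [show s'+s' = 2*s' from by omega] at h2
    rw [show s'+0 = s' from by omega] at h1
    linarith
  have e1 : ∑ i ∈ Finset.range s',
      ((A i + A (i+1))/6 + B i/6 + (A (i+1)/6 + (B i + B (i+1))/6))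
      = (∑ i ∈ Finset.range s', A i) * (1/6) + (∑ i ∈ Finset.range s', A (i+1)) * (1/3)
        + (∑ i ∈ Finset.range s', B i) * (1/3) + (∑ i ∈ Finset.range s', B (i+1)) * (1/6) := by
    rw [Finset.sum_mul, Finset.sum_mul, Finset.sum_mul, Finset.sum_mul,
      ← Finset.sum_add_distrib, ← Finset.sum_add_distrib, ← Finset.sum_add_distrib]
    exact Finset.sum_congr rfl (fun i _ => by ring)
  have e2 : ∑ v ∈ Finset.range s',
      (A (s'+2+v)/6 + (B (s'+v) + B (s'+1+v))/6
        + ((A (s'+2+v) + A (s'+3+v))/6 + B (s'+1+v)/6))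
      = (∑ v ∈ Finset.range s', A (s'+2+v)) * (1/3)
        + (∑ v ∈ Finset.range s', A (s'+3+v)) * (1/6)
        + (∑ v ∈ Finset.range s', B (s'+v)) * (1/6)
        + (∑ v ∈ Finset.range s', B (s'+1+v)) * (1/3) := by
    rw [Finset.sum_mul, Finset.sum_mul, Finset.sum_mul, Finset.sum_mul,
      ← Finset.sum_add_distrib, ← Finset.sum_add_distrib, ← Finset.sum_add_distrib]
    exact Finset.sum_congr rfl (fun v _ => by ring)
  rw [e1, e2]
  linarith



lemma sum_Wint (G : ℝ × ℝ → ℝ) (j s' : ℕ) :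
    ∑ r ∈ Finset.range (4*(s'+1)-2), Wint G j (s'+1) r
      = (1/6) * (3 * (∑ p ∈ Finset.range (2*s'+3), G ((p:ℝ), (j:ℝ)))
          + 3 * (∑ q ∈ Finset.range (2*s'+1), G ((q:ℝ), (j:ℝ)+1))
          - 2 * G (((0:ℕ):ℝ), (j:ℝ)) - G (((s'+1:ℕ):ℝ), (j:ℝ)) - 2 * G (((2*s'+2:ℕ):ℝ), (j:ℝ))
          - G (((0:ℕ):ℝ), (j:ℝ)+1) + G ((s':ℝ), (j:ℝ)+1) - G (((2*s':ℕ):ℝ), (j:ℝ)+1)) := by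
  have hsplit : ∑ r ∈ Finset.range (4*(s'+1)-2), Wint G j (s'+1) r
      = (∑ r ∈ Finset.range (2*(s'+1)), Wint G j (s'+1) r)
        + ∑ u ∈ Finset.range (2*s'), Wint G j (s'+1) (2*(s'+1)+u) := by
    rw [show 4*(s'+1)-2 = 2*(s'+1) + 2*s' from by omega]
    exact cat_sum _ _ _
  have hp1 : ∑ r ∈ Finset.range (2*(s'+1)), Wint G j (s'+1) r
      = ∑ i ∈ Finset.range (s'+1), (Wint G j (s'+1) (2*i) + Wint G j (s'+1) (2*i+1)) :=
    pair_sum _ _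
  have hp2 : ∑ u ∈ Finset.range (2*s'), Wint G j (s'+1) (2*(s'+1)+u)
      = ∑ v ∈ Finset.range s',
          (Wint G j (s'+1) (2*(s'+1)+2*v) + Wint G j (s'+1) (2*(s'+1)+(2*v+1))) :=
    pair_sum _ _
  have hlast : ∑ i ∈ Finset.range (s'+1), (Wint G j (s'+1) (2*i) + Wint G j (s'+1) (2*i+1))
      = (∑ i ∈ Finset.range s', (Wint G j (s'+1) (2*i) + Wint G j (s'+1) (2*i+1)))
        + (Wint G j (s'+1) (2*s') + Wint G j (s'+1) (2*s'+1)) :=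
    Finset.sum_range_succ _ _
  rw [hsplit, hp1, hlast, hp2]
  have q1 : ∀ i ∈ Finset.range s', Wint G j (s'+1) (2*i) + Wint G j (s'+1) (2*i+1)
      = ((G ((i:ℝ), (j:ℝ)) + G (((i+1:ℕ):ℝ), (j:ℝ)))/6 + G ((i:ℝ), (j:ℝ)+1)/6)
        + (G (((i+1:ℕ):ℝ), (j:ℝ))/6 + (G ((i:ℝ), (j:ℝ)+1) + G (((i+1:ℕ):ℝ), (j:ℝ)+1))/6) := by
    intro i hi
    rw [W_even_lo G j (s'+1) i (by simpa using Nat.lt_succ_of_lt (Finset.mem_range.mp hi)),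
      W_odd_lo G j (s'+1) i (by have := Finset.mem_range.mp hi; omega)]
  have q2 : Wint G j (s'+1) (2*s') + Wint G j (s'+1) (2*s'+1)
      = ((G ((s':ℝ), (j:ℝ)) + G (((s'+1:ℕ):ℝ), (j:ℝ)))/6 + G ((s':ℝ), (j:ℝ)+1)/6)
        + ((G (((s'+1:ℕ):ℝ), (j:ℝ)) + G (((s'+2:ℕ):ℝ), (j:ℝ)))/6 + G ((s':ℝ), (j:ℝ)+1)/6) := by
    rw [W_even_lo G j (s'+1) s' (by omega), W_defect G j s']
  have q3 : ∀ v ∈ Finset.range s',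
      Wint G j (s'+1) (2*(s'+1)+2*v) + Wint G j (s'+1) (2*(s'+1)+(2*v+1))
      = (G (((s'+2+v:ℕ):ℝ), (j:ℝ))/6
          + (G (((s'+v:ℕ):ℝ), (j:ℝ)+1) + G (((s'+1+v:ℕ):ℝ), (j:ℝ)+1))/6)
        + ((G (((s'+2+v:ℕ):ℝ), (j:ℝ)) + G (((s'+3+v:ℕ):ℝ), (j:ℝ)))/6
          + G (((s'+1+v:ℕ):ℝ), (j:ℝ)+1)/6) := by
    intro v hv
    have hv' := Finset.mem_range.mp hv
    rw [show 2*(s'+1)+(2*v+1) = 2*(s'+1)+2*v+1 from by omega]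
    rw [W_even_hi G j s' v hv', W_odd_hi G j s' v hv']
  rw [Finset.sum_congr rfl q1, q2, Finset.sum_congr rfl q3]
  have hrc := row_combine s' (fun p : ℕ => G ((p:ℝ), (j:ℝ))) (fun q : ℕ => G ((q:ℝ), (j:ℝ)+1))
  convert hrc using 2 <;> push_cast <;> ring




/-! ### flips -/

lemma P_flip_mem {K e1 e2 : ℝ} (h1 : |e1| = 1) (h2 : |e2| = 1) {p : ℝ × ℝ}
    (hp : p ∈ P K) : ((e1 * p.1, e2 * p.2) : ℝ × ℝ) ∈ P K := by
  rw [mem_P] at *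
  simp only [abs_mul, h1, h2, one_mul]
  exact hp

lemma concaveOn_flip {K e1 e2 : ℝ} (h1 : |e1| = 1) (h2 : |e2| = 1) {g : ℝ × ℝ → ℝ}
    (hc : ConcaveOn ℝ (P K) g) :
    ConcaveOn ℝ (P K) (fun p : ℝ × ℝ => g (e1 * p.1, e2 * p.2)) := by
  constructor
  · exact convex_P K
  · intro p hp q hq a b ha hb hab
    have := hc.2 (P_flip_mem h1 h2 hp) (P_flip_mem h1 h2 hq) ha hb hab
    rw [comb_pt] at this
    simp only at this ⊢
    rw [comb_pt]
    simp only
    have e1' : a * (e1 * p.1) + b * (e1 * q.1) = e1 * (a * p.1 + b * q.1) := by ring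
    have e2' : a * (e2 * p.2) + b * (e2 * q.2) = e2 * (a * p.2 + b * q.2) := by ring
    rw [e1', e2'] at this
    exact this

lemma continuousOn_flip {K e1 e2 : ℝ} (h1 : |e1| = 1) (h2 : |e2| = 1) {g : ℝ × ℝ → ℝ}
    (hg : ContinuousOn g (P K)) :
    ContinuousOn (fun p : ℝ × ℝ => g (e1 * p.1, e2 * p.2)) (P K) := by
  apply hg.comp (Continuous.continuousOn (by fun_prop))
  intro p hp
  exact P_flip_mem h1 h2 hp

/-! ### Fubini decomposition -/

variable (k : ℕ) (g : ℝ × ℝ → ℝ)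

noncomputable def ff (k : ℕ) (g : ℝ × ℝ → ℝ) : ℝ × ℝ → ℝ := (P (k:ℝ)).indicator g

noncomputable def FF (k : ℕ) (g : ℝ × ℝ → ℝ) : ℝ → ℝ := fun y => ∫ x : ℝ, ff k g (x, y)

lemma hInt (hg : ContinuousOn g (P (k:ℝ))) : IntegrableOn g (P (k:ℝ)) volume :=
  hg.integrableOn_compact (isCompact_P _)

lemma hff_int (hg : ContinuousOn g (P (k:ℝ))) : Integrable (ff k g) volume :=
  (hInt k g hg).integrable_indicator (isClosed_P _).measurableSet

lemma hff_prod_int (hg : ContinuousOn g (P (k:ℝ))) :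
    Integrable (ff k g) ((volume : Measure ℝ).prod volume) := by
  have := hff_int k g hg
  rwa [Measure.volume_eq_prod] at this

lemma hFF_int (hg : ContinuousOn g (P (k:ℝ))) : Integrable (FF k g) volume := by
  have h := ((hff_prod_int k g hg).swap).integral_prod_left
  exact h

lemma fubini (hg : ContinuousOn g (P (k:ℝ))) :
    ∫ z in P (k:ℝ), g z = ∫ y : ℝ, FF k g y := by
  rw [← MeasureTheory.integral_indicator (isClosed_P _).measurableSet]
  have h1 : ∫ z : ℝ × ℝ, (P (k:ℝ)).indicator g z
      = ∫ z : ℝ × ℝ, ff k g z ∂((volume : Measure ℝ).prod volume) := by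
    rw [← Measure.volume_eq_prod]; rfl
  rw [h1, MeasureTheory.integral_prod_symm _ (hff_prod_int k g hg)]
  rfl

/-- width at height `y` -/
noncomputable def wR (k : ℕ) (y : ℝ) : ℝ := 2*(k:ℝ) - 2*|y|

lemma section_eq (y : ℝ) :
    (fun x => ff k g (x, y)) = (Set.Icc (-(wR k y)) (wR k y)).indicator (fun x => g (x, y)) := by
  funext x
  by_cases h : ((x, y) : ℝ × ℝ) ∈ P (k:ℝ)
  · rw [ff, Set.indicator_of_mem h, Set.indicator_of_mem]
    rw [mem_P] at h
    simp only at h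
    rw [Set.mem_Icc, wR]
    constructor <;> [linarith [neg_abs_le x]; linarith [le_abs_self x]]
  · rw [ff, Set.indicator_of_notMem h, Set.indicator_of_notMem]
    rw [mem_P] at h
    simp only at h
    push_neg at h
    rw [Set.mem_Icc, wR]
    intro hcon
    have h1 : |x| ≤ 2*(k:ℝ) - 2*|y| := abs_le.mpr (by constructor <;> linarith [hcon.1, hcon.2])
    linarith

lemma FF_eq (y : ℝ) (h1 : -(k:ℝ) ≤ y) (h2 : y ≤ k) :
    FF k g y = ∫ x in (-(wR k y))..(wR k y), g (x, y) := by
  have hw : 0 ≤ wR k y := by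
    rw [wR]
    rcases abs_cases y with ⟨h, _⟩ | ⟨h, _⟩ <;> linarith
  rw [FF, section_eq k g y, MeasureTheory.integral_indicator measurableSet_Icc,
    integral_Icc_eq_integral_Ioc, ← intervalIntegral.integral_of_le (by linarith)]

lemma FF_zero (y : ℝ) (h : ¬ (-(k:ℝ) ≤ y ∧ y ≤ k)) : FF k g y = 0 := by
  have hk0 : (0:ℝ) ≤ k := Nat.cast_nonneg k
  have hy : (k:ℝ) < |y| := by
    rcases not_and_or.mp h with h' | h' <;> push_neg at h' <;>
      rcases abs_cases y with ⟨he, _⟩ | ⟨he, _⟩ <;> linarith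
  have hw : wR k y < 0 := by rw [wR]; linarith
  rw [FF, section_eq k g y, MeasureTheory.integral_indicator measurableSet_Icc,
    Set.Icc_eq_empty (by intro hcon; linarith)]
  simp



noncomputable def g2 (g : ℝ × ℝ → ℝ) : ℝ × ℝ → ℝ := fun p => g (-p.1, p.2)
noncomputable def g3 (g : ℝ × ℝ → ℝ) : ℝ × ℝ → ℝ := fun p => g (p.1, -p.2)
noncomputable def g4 (g : ℝ × ℝ → ℝ) : ℝ × ℝ → ℝ := fun p => g (-p.1, -p.2)

lemma g2_concave {K : ℝ} {g : ℝ × ℝ → ℝ} (hc : ConcaveOn ℝ (P K) g) :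
    ConcaveOn ℝ (P K) (g2 g) := by
  have h := concaveOn_flip (show |(-1:ℝ)| = 1 by norm_num) (show |(1:ℝ)| = 1 by norm_num) hc
  unfold g2; simpa using h

lemma g3_concave {K : ℝ} {g : ℝ × ℝ → ℝ} (hc : ConcaveOn ℝ (P K) g) :
    ConcaveOn ℝ (P K) (g3 g) := by
  have h := concaveOn_flip (show |(1:ℝ)| = 1 by norm_num) (show |(-1:ℝ)| = 1 by norm_num) hc
  unfold g3; simpa using h

lemma g4_concave {K : ℝ} {g : ℝ × ℝ → ℝ} (hc : ConcaveOn ℝ (P K) g) :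
    ConcaveOn ℝ (P K) (g4 g) := by
  have h := concaveOn_flip (show |(-1:ℝ)| = 1 by norm_num) (show |(-1:ℝ)| = 1 by norm_num) hc
  unfold g4; simpa using h

lemma g2_cont {K : ℝ} {g : ℝ × ℝ → ℝ} (hg : ContinuousOn g (P K)) :
    ContinuousOn (g2 g) (P K) := by
  have h := continuousOn_flip (show |(-1:ℝ)| = 1 by norm_num) (show |(1:ℝ)| = 1 by norm_num) hg
  unfold g2; simpa using h

lemma g3_cont {K : ℝ} {g : ℝ × ℝ → ℝ} (hg : ContinuousOn g (P K)) :
    ContinuousOn (g3 g) (P K) := by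
  have h := continuousOn_flip (show |(1:ℝ)| = 1 by norm_num) (show |(-1:ℝ)| = 1 by norm_num) hg
  unfold g3; simpa using h

lemma g4_cont {K : ℝ} {g : ℝ × ℝ → ℝ} (hg : ContinuousOn g (P K)) :
    ContinuousOn (g4 g) (P K) := by
  have h := continuousOn_flip (show |(-1:ℝ)| = 1 by norm_num) (show |(-1:ℝ)| = 1 by norm_num) hg
  unfold g4; simpa using h

lemma Wf_cont (G : ℝ × ℝ → ℝ) (j s r : ℕ) : Continuous (fun t => Wf G j s r t) := by
  unfold Wf DD phi
  fun_prop

lemma FF_total (k : ℕ) (g : ℝ × ℝ → ℝ) (hg : ContinuousOn g (P (k:ℝ))) :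
    ∫ y : ℝ, FF k g y = ∑ j ∈ Finset.range k,
      ((∫ y in (j:ℝ)..((j:ℝ)+1), FF k g y) + ∫ y in (-(j:ℝ)-1)..(-(j:ℝ)), FF k g y) := by
  have hFi := hFF_int k g hg
  have h1 : (fun y => FF k g y) = (Set.Icc (-(k:ℝ)) k).indicator (FF k g) := by
    funext y
    by_cases h : y ∈ Set.Icc (-(k:ℝ)) k
    · rw [Set.indicator_of_mem h]
    · rw [Set.indicator_of_notMem h, FF_zero k g y (by simpa [Set.mem_Icc] using h)]
  have h2 : ∫ y : ℝ, FF k g y = ∫ y in (-(k:ℝ))..k, FF k g y := by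
    conv_lhs => rw [h1]
    rw [MeasureTheory.integral_indicator measurableSet_Icc, integral_Icc_eq_integral_Ioc,
      ← intervalIntegral.integral_of_le (by linarith [Nat.cast_nonneg (α := ℝ) k] : -(k:ℝ) ≤ k)]
  have h3 : ∑ i ∈ Finset.range (2*k), ∫ y in (-(k:ℝ)+i)..(-(k:ℝ)+(i+1):ℝ), FF k g y
      = ∫ y in (-(k:ℝ)+(0:ℕ))..(-(k:ℝ)+(2*k:ℕ):ℝ), FF k g y := by
    have := intervalIntegral.sum_integral_adjacent_intervals
      (a := fun i : ℕ => -(k:ℝ)+i) (n := 2*k) (f := FF k g) (μ := volume)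
      (fun i _ => hFi.intervalIntegrable)
    convert this using 2
    push_cast
    ring
  rw [h2]
  have h4 : ∫ y in (-(k:ℝ))..k, FF k g y
      = ∑ i ∈ Finset.range (2*k), ∫ y in (-(k:ℝ)+i)..(-(k:ℝ)+(i+1):ℝ), FF k g y := by
    rw [h3]
    congr 1 <;> push_cast <;> ring
  rw [h4, show 2*k = k + k from by omega, cat_sum]
  have hA : ∑ i ∈ Finset.range k, ∫ y in (-(k:ℝ)+i)..(-(k:ℝ)+((i:ℝ)+1)), FF k g y
      = ∑ j ∈ Finset.range k, ∫ y in (-(j:ℝ)-1)..(-(j:ℝ)), FF k g y := by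
    rw [← Finset.sum_range_reflect]
    apply Finset.sum_congr rfl
    intro j hj
    have hj' := Finset.mem_range.mp hj
    obtain ⟨d, hd⟩ : ∃ d, k = j + 1 + d := ⟨k-1-j, by omega⟩
    have e1 : k - 1 - j = d := by omega
    rw [e1]
    subst hd
    congr 1 <;> push_cast <;> ring
  have hB : ∑ u ∈ Finset.range k, ∫ y in (-(k:ℝ)+(k+u:ℕ))..(-(k:ℝ)+(((k+u:ℕ):ℝ)+1)), FF k g y
      = ∑ j ∈ Finset.range k, ∫ y in (j:ℝ)..((j:ℝ)+1), FF k g y := by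
    apply Finset.sum_congr rfl
    intro j hj
    congr 1 <;> push_cast <;> ring
  rw [hA, hB, ← Finset.sum_add_distrib]
  exact Finset.sum_congr rfl (fun j _ => add_comm _ _)



lemma row_mem (K y w : ℝ) (hw : w = 2*K - 2*|y|) (h0 : 0 ≤ w) :
    ((w, y) : ℝ × ℝ) ∈ P K ∧ ((-w, y) : ℝ × ℝ) ∈ P K ∧ (((0:ℝ), y) : ℝ × ℝ) ∈ P K := by
  refine ⟨?_, ?_, ?_⟩ <;> rw [mem_P] <;> simp only
  · rw [abs_of_nonneg h0]; linarith
  · rw [abs_neg, abs_of_nonneg h0]; linarith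
  · rw [abs_zero]; linarith

lemma strip_lower (k : ℕ) (g : ℝ × ℝ → ℝ) (hg : ContinuousOn g (P (k:ℝ)))
    (hc : ConcaveOn ℝ (P (k:ℝ)) g) (j s' : ℕ) (hk : k = j + s' + 1) :
    (∑ r ∈ Finset.range (4*(s'+1)-2), Wint g j (s'+1) r)
      + (∑ r ∈ Finset.range (4*(s'+1)-2), Wint (g2 g) j (s'+1) r)
      + ((∑ r ∈ Finset.range (4*(s'+1)-2), Wint (g3 g) j (s'+1) r)
      + (∑ r ∈ Finset.range (4*(s'+1)-2), Wint (g4 g) j (s'+1) r))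
    ≤ (∫ y in (j:ℝ)..((j:ℝ)+1), FF k g y) + ∫ y in (-(j:ℝ)-1)..(-(j:ℝ)), FF k g y := by
  have hj0 : (0:ℝ) ≤ (j:ℝ) := Nat.cast_nonneg j
  have hkj : (k:ℝ) = (j:ℝ) + (s':ℝ) + 1 := by rw [hk]; push_cast; ring
  have hjk : (j:ℝ) + 1 ≤ (k:ℝ) := by linarith [Nat.cast_nonneg (α := ℝ) s']
  -- pointwise slice analysis, for a given sign of y
  have main : ∀ (G3 G4 : ℝ × ℝ → ℝ), ContinuousOn G3 (P (k:ℝ)) → ConcaveOn ℝ (P (k:ℝ)) G3 →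
      ContinuousOn G4 (P (k:ℝ)) → ConcaveOn ℝ (P (k:ℝ)) G4 →
      ∀ (y : ℝ), y ∈ Set.Icc (j:ℝ) ((j:ℝ)+1) →
      ∀ (Y : ℝ), (∀ x : ℝ, G3 (x, y) = g (x, Y)) → (∀ x : ℝ, G4 (x, y) = g (-x, Y)) →
      |Y| = |y| →
      (∑ r ∈ Finset.range (4*(s'+1)-2), Wf G3 j (s'+1) r (y - j))
        + (∑ r ∈ Finset.range (4*(s'+1)-2), Wf G4 j (s'+1) r (y - j)) ≤ FF k g Y := by
    intro G3 G4 hg3 hc3 hg4 hc4 y hy Y hY3 hY4 hYabs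
    obtain ⟨hy0, hy1⟩ := hy
    set t : ℝ := y - j with htdef
    have ht0 : 0 ≤ t := by simp only [htdef]; linarith
    have ht1 : t ≤ 1 := by simp only [htdef]; linarith
    have hyt : (j:ℝ) + t = y := by simp only [htdef]; ring
    have habsy : |y| = y := abs_of_nonneg (by linarith)
    have hYk1 : -(k:ℝ) ≤ Y := by
      have := neg_abs_le Y
      rw [hYabs, habsy] at this
      linarith
    have hYk2 : Y ≤ (k:ℝ) := by
      have := le_abs_self Y
      rw [hYabs, habsy] at this
      linarith
    have hwv : wR k Y = 2*((s'+1:ℕ):ℝ) - 2*t := by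
      rw [wR, hYabs, habsy]
      push_cast
      linarith [hkj]
    have hw0 : 0 ≤ wR k Y := by rw [hwv]; push_cast; linarith
    obtain ⟨hm1, hm2, hm3⟩ := row_mem (k:ℝ) Y (wR k Y) (by rw [wR]) hw0
    -- memberships at row Y, but our `y`-row functions see row y; transfer via |Y| = |y| is
    -- not needed: the slice integrands are over row Y directly.
    have ii2 : IntervalIntegrable (fun x => g (x, Y)) volume 0 (wR k Y) := by
      apply ContinuousOn.intervalIntegrable
      rw [Set.uIcc_of_le hw0]
      apply hg.comp (Continuous.continuousOn (by fun_prop))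
      intro x hx
      exact seg_mem (convex_P _) hm3 hm1 x hx
    have ii1 : IntervalIntegrable (fun x => g (x, Y)) volume (-(wR k Y)) 0 := by
      apply ContinuousOn.intervalIntegrable
      rw [Set.uIcc_of_le (by linarith : -(wR k Y) ≤ 0)]
      apply hg.comp (Continuous.continuousOn (by fun_prop))
      intro x hx
      exact seg_mem (convex_P _) hm2 hm3 x hx
    have hFq : FF k g Y = (∫ x in (0:ℝ)..(wR k Y), g (-x, Y)) + ∫ x in (0:ℝ)..(wR k Y), g (x, Y) := by
      rw [FF_eq k g Y hYk1 hYk2, ← integral_add_adjacent_intervals ii1 ii2]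
      congr 1
      have hneg := intervalIntegral.integral_comp_neg (a := (0:ℝ)) (b := wR k Y) (fun x => g (x, Y))
      rw [neg_zero] at hneg
      exact hneg.symm
    rw [hFq]
    have hq3 := qrow k j (s'+1) (by omega) (by omega) G3 hg3 hc3 t ht0 ht1
    have hq4 := qrow k j (s'+1) (by omega) (by omega) G4 hg4 hc4 t ht0 ht1
    rw [hyt] at hq3 hq4
    have e3 : ∫ x in (0:ℝ)..(2*((s'+1:ℕ):ℝ) - 2*t), G3 (x, y) = ∫ x in (0:ℝ)..(wR k Y), g (x, Y) := by
      rw [hwv]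
      apply intervalIntegral.integral_congr
      intro x _
      exact hY3 x
    have e4 : ∫ x in (0:ℝ)..(2*((s'+1:ℕ):ℝ) - 2*t), G4 (x, y) = ∫ x in (0:ℝ)..(wR k Y), g (-x, Y) := by
      rw [hwv]
      apply intervalIntegral.integral_congr
      intro x _
      exact hY4 x
    rw [e3] at hq3
    rw [e4] at hq4
    linarith
  -- continuity of the polynomial minorants
  have polyCont : ∀ (G : ℝ × ℝ → ℝ), Continuous (fun y : ℝ =>
      ∑ r ∈ Finset.range (4*(s'+1)-2), Wf G j (s'+1) r (y - j)) := by
    intro G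
    apply continuous_finset_sum
    intro r _
    exact (Wf_cont G j (s'+1) r).comp (by fun_prop)
  have polyVal : ∀ (G : ℝ × ℝ → ℝ),
      (∫ y in (j:ℝ)..((j:ℝ)+1), ∑ r ∈ Finset.range (4*(s'+1)-2), Wf G j (s'+1) r (y - j))
        = ∑ r ∈ Finset.range (4*(s'+1)-2), Wint G j (s'+1) r := by
    intro G
    have h1 := intervalIntegral.integral_comp_sub_right
      (a := (j:ℝ)) (b := (j:ℝ)+1)
      (fun t => ∑ r ∈ Finset.range (4*(s'+1)-2), Wf G j (s'+1) r t) (j:ℝ)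
    rw [h1, show (j:ℝ) - (j:ℝ) = 0 from by ring, show (j:ℝ)+1 - (j:ℝ) = 1 from by ring,
      intervalIntegral.integral_finset_sum
        (fun r _ => (Wf_cont G j (s'+1) r).intervalIntegrable 0 1)]
    exact Finset.sum_congr rfl (fun r _ => Wf_int G j (s'+1) r)
  have hFFi := hFF_int k g hg
  -- upper strip
  have hup : (∑ r ∈ Finset.range (4*(s'+1)-2), Wint g j (s'+1) r)
      + (∑ r ∈ Finset.range (4*(s'+1)-2), Wint (g2 g) j (s'+1) r)
      ≤ ∫ y in (j:ℝ)..((j:ℝ)+1), FF k g y := by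
    have hmono := intervalIntegral.integral_mono_on (by linarith : (j:ℝ) ≤ (j:ℝ)+1)
      (((polyCont g).add (polyCont (g2 g))).intervalIntegrable _ _)
      (hFFi.intervalIntegrable)
      (fun y hy => main g (g2 g) hg hc (g2_cont hg) (g2_concave hc) y hy y
        (fun x => rfl) (fun x => rfl) rfl)
    simp only [Pi.add_apply] at hmono
    rw [intervalIntegral.integral_add
      (((polyCont g)).intervalIntegrable _ _) (((polyCont (g2 g))).intervalIntegrable _ _),
      polyVal g, polyVal (g2 g)] at hmono
    exact hmono
  -- lower strip
  have hlowEq : (∫ y in (-(j:ℝ)-1)..(-(j:ℝ)), FF k g y)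
      = ∫ y in (j:ℝ)..((j:ℝ)+1), FF k g (-y) := by
    have hneg := intervalIntegral.integral_comp_neg (a := (j:ℝ)) (b := (j:ℝ)+1) (FF k g)
    rw [hneg]
    congr 1
    ring
  have hlow : (∑ r ∈ Finset.range (4*(s'+1)-2), Wint (g3 g) j (s'+1) r)
      + (∑ r ∈ Finset.range (4*(s'+1)-2), Wint (g4 g) j (s'+1) r)
      ≤ ∫ y in (-(j:ℝ)-1)..(-(j:ℝ)), FF k g y := by
    rw [hlowEq]
    have hmono := intervalIntegral.integral_mono_on (by linarith : (j:ℝ) ≤ (j:ℝ)+1)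
      (((polyCont (g3 g)).add (polyCont (g4 g))).intervalIntegrable _ _)
      ((hFFi.comp_neg).intervalIntegrable)
      (fun y hy => main (g3 g) (g4 g) (g3_cont hg) (g3_concave hc) (g4_cont hg) (g4_concave hc)
        y hy (-y) (fun x => rfl) (fun x => rfl) (abs_neg y))
    simp only [Pi.add_apply] at hmono
    rw [intervalIntegral.integral_add
      (((polyCont (g3 g))).intervalIntegrable _ _) (((polyCont (g4 g))).intervalIntegrable _ _),
      polyVal (g3 g), polyVal (g4 g)] at hmono
    exact hmono
  linarith




lemma shift_sum (f : ℕ → ℝ) (k : ℕ) :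
    ∑ j ∈ Finset.range k, f (j+1) = (∑ n ∈ Finset.range (k+1), f n) - f 0 := by
  have h1 := Finset.sum_range_succ' f k
  linarith

lemma drop_last (f : ℕ → ℝ) (k : ℕ) :
    ∑ j ∈ Finset.range k, f j = (∑ n ∈ Finset.range (k+1), f n) - f k := by
  have h1 := Finset.sum_range_succ f k
  linarith

lemma Icc_sum_split (f : ℤ → ℝ) (w : ℕ) :
    ∑ m ∈ Finset.Icc (-(w:ℤ)) (w:ℤ), f m
      = (∑ p ∈ Finset.range (w+1), f p) + (∑ p ∈ Finset.range (w+1), f (-(p:ℤ))) - f 0 := by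
  induction w with
  | zero => simp
  | succ w ih =>
      have hins : Finset.Icc (-(w+1:ℤ)) (w+1:ℤ)
          = insert (-(w+1:ℤ)) (insert ((w+1:ℤ)) (Finset.Icc (-(w:ℤ)) (w:ℤ))) := by
        ext m
        simp only [Finset.mem_Icc, Finset.mem_insert]
        omega
      have h1 : ((w+1:ℤ)) ∉ Finset.Icc (-(w:ℤ)) (w:ℤ) := by
        simp only [Finset.mem_Icc]; omega
      have h2 : (-(w+1:ℤ)) ∉ insert ((w+1:ℤ)) (Finset.Icc (-(w:ℤ)) (w:ℤ)) := by
        simp only [Finset.mem_insert, Finset.mem_Icc]; omega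
      rw [show ((w+1:ℕ):ℤ) = (w:ℤ)+1 from by push_cast; ring] at *
      rw [hins, Finset.sum_insert h2, Finset.sum_insert h1, ih,
        Finset.sum_range_succ (fun p => f p) (w+1), Finset.sum_range_succ (fun p => f (-(p:ℤ))) (w+1)]
      push_cast
      ring

/-- quadrant row sums -/
noncomputable def TT (k : ℕ) (H : ℕ → ℕ → ℝ) (n : ℕ) : ℝ :=
  ∑ p ∈ Finset.range (2*(k-n)+1), H p n

lemma global_rows (k : ℕ) (hk : 1 ≤ k) (H : ℕ → ℕ → ℝ) :
    ∑ j ∈ Finset.range k,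
      (3*(∑ p ∈ Finset.range (2*(k-j-1)+3), H p j)
        + 3*(∑ q ∈ Finset.range (2*(k-j-1)+1), H q (j+1))
        - 2*H 0 j - H (k-j-1+1) j - 2*H (2*(k-j-1)+2) j
        - H 0 (j+1) + H (k-j-1) (j+1) - H (2*(k-j-1)) (j+1))
    = 6*(∑ n ∈ Finset.range (k+1), TT k H n)
      - 3*(TT k H 0) - 3*(∑ n ∈ Finset.range (k+1), H 0 n)
      - 3*(∑ n ∈ Finset.range (k+1), H (2*(k-n)) n)
      + 2*H 0 k + H 0 0 - H k 0 + H (2*k) 0 := by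
  have hnorm : ∀ j ∈ Finset.range k,
      (3*(∑ p ∈ Finset.range (2*(k-j-1)+3), H p j)
        + 3*(∑ q ∈ Finset.range (2*(k-j-1)+1), H q (j+1))
        - 2*H 0 j - H (k-j-1+1) j - 2*H (2*(k-j-1)+2) j
        - H 0 (j+1) + H (k-j-1) (j+1) - H (2*(k-j-1)) (j+1))
      = 3*(TT k H j) + 3*(TT k H (j+1))
        - 2*H 0 j - H (k-j) j - 2*H (2*(k-j)) j
        - H 0 (j+1) + H (k-(j+1)) (j+1) - H (2*(k-(j+1))) (j+1) := by
    intro j hj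
    have hj' := Finset.mem_range.mp hj
    rw [show 2*(k-j-1)+3 = 2*(k-j)+1 from by omega,
      show k-j-1+1 = k-j from by omega,
      show 2*(k-j-1)+2 = 2*(k-j) from by omega,
      show 2*(k-j-1)+1 = 2*(k-(j+1))+1 from by omega,
      show k-j-1 = k-(j+1) from by omega]
    rfl
  rw [Finset.sum_congr rfl hnorm]
  have hT1 : ∑ j ∈ Finset.range k, TT k H j
      = (∑ n ∈ Finset.range (k+1), TT k H n) - TT k H k := drop_last _ _
  have hT2 : ∑ j ∈ Finset.range k, TT k H (j+1)
      = (∑ n ∈ Finset.range (k+1), TT k H n) - TT k H 0 := shift_sum _ _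
  have hU1 : ∑ j ∈ Finset.range k, H 0 j
      = (∑ n ∈ Finset.range (k+1), H 0 n) - H 0 k := drop_last _ _
  have hU2 : ∑ j ∈ Finset.range k, H 0 (j+1)
      = (∑ n ∈ Finset.range (k+1), H 0 n) - H 0 0 := shift_sum _ _
  have hV1 : ∑ j ∈ Finset.range k, H (k-j) j
      = (∑ n ∈ Finset.range (k+1), H (k-n) n) - H (k-k) k := drop_last (fun n => H (k-n) n) _
  have hV2 : ∑ j ∈ Finset.range k, H (k-(j+1)) (j+1)
      = (∑ n ∈ Finset.range (k+1), H (k-n) n) - H (k-0) 0 := shift_sum (fun n => H (k-n) n) _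
  have hW1 : ∑ j ∈ Finset.range k, H (2*(k-j)) j
      = (∑ n ∈ Finset.range (k+1), H (2*(k-n)) n) - H (2*(k-k)) k :=
    drop_last (fun n => H (2*(k-n)) n) _
  have hW2 : ∑ j ∈ Finset.range k, H (2*(k-(j+1))) (j+1)
      = (∑ n ∈ Finset.range (k+1), H (2*(k-n)) n) - H (2*(k-0)) 0 :=
    shift_sum (fun n => H (2*(k-n)) n) _
  have hTk : TT k H k = H 0 k := by
    rw [TT, show 2*(k-k)+1 = 1 from by omega, Finset.sum_range_one]
  have e1 : k - k = 0 := by omega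
  have e2 : k - 0 = k := by omega
  rw [e2] at hV2 hW2
  rw [e1] at hW1 hV1
  rw [show (2:ℕ)*0 = 0 from rfl] at hW1
  calc ∑ j ∈ Finset.range k,
      (3*(TT k H j) + 3*(TT k H (j+1))
        - 2*H 0 j - H (k-j) j - 2*H (2*(k-j)) j
        - H 0 (j+1) + H (k-(j+1)) (j+1) - H (2*(k-(j+1))) (j+1))
      = 3*(∑ j ∈ Finset.range k, TT k H j) + 3*(∑ j ∈ Finset.range k, TT k H (j+1))
        - 2*(∑ j ∈ Finset.range k, H 0 j) - (∑ j ∈ Finset.range k, H (k-j) j)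
        - 2*(∑ j ∈ Finset.range k, H (2*(k-j)) j)
        - (∑ j ∈ Finset.range k, H 0 (j+1)) + (∑ j ∈ Finset.range k, H (k-(j+1)) (j+1))
        - (∑ j ∈ Finset.range k, H (2*(k-(j+1))) (j+1)) := by
        rw [Finset.sum_sub_distrib, Finset.sum_add_distrib, Finset.sum_sub_distrib,
          Finset.sum_sub_distrib, Finset.sum_sub_distrib, Finset.sum_sub_distrib,
          Finset.sum_add_distrib, ← Finset.mul_sum, ← Finset.mul_sum, ← Finset.mul_sum,
          ← Finset.mul_sum]
    _ = _ := by
        rw [hT1, hT2, hU1, hU2, hV1, hV2, hW1, hW2, hTk]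
        set S1 := ∑ n ∈ Finset.range (k+1), TT k H n with hS1
        set S2 := ∑ n ∈ Finset.range (k+1), H 0 n with hS2
        set S3 := ∑ n ∈ Finset.range (k+1), H (2*(k-n)) n with hS3
        set S4 := ∑ n ∈ Finset.range (k+1), H (k-n) n with hS4
        ring



noncomputable def VV6 (G : ℝ × ℝ → ℝ) (j s' : ℕ) : ℝ :=
  3 * (∑ p ∈ Finset.range (2*s'+3), G ((p:ℝ), (j:ℝ)))
    + 3 * (∑ q ∈ Finset.range (2*s'+1), G ((q:ℝ), (j:ℝ)+1))
    - 2 * G (((0:ℕ):ℝ), (j:ℝ)) - G (((s'+1:ℕ):ℝ), (j:ℝ)) - 2 * G (((2*s'+2:ℕ):ℝ), (j:ℝ))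
    - G (((0:ℕ):ℝ), (j:ℝ)+1) + G ((s':ℝ), (j:ℝ)+1) - G (((2*s':ℕ):ℝ), (j:ℝ)+1)

lemma sum_Wint_VV6 (G : ℝ × ℝ → ℝ) (j s' : ℕ) :
    ∑ r ∈ Finset.range (4*(s'+1)-2), Wint G j (s'+1) r = (1/6) * VV6 G j s' := by
  rw [VV6]
  exact sum_Wint G j s'

lemma VV6_eq_rows (G : ℝ × ℝ → ℝ) (H : ℕ → ℕ → ℝ)
    (hGH : ∀ p n : ℕ, G ((p:ℝ), (n:ℝ)) = H p n) (k j : ℕ) :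
    VV6 G j (k-j-1) = 3*(∑ p ∈ Finset.range (2*(k-j-1)+3), H p j)
        + 3*(∑ q ∈ Finset.range (2*(k-j-1)+1), H q (j+1))
        - 2*H 0 j - H (k-j-1+1) j - 2*H (2*(k-j-1)+2) j
        - H 0 (j+1) + H (k-j-1) (j+1) - H (2*(k-j-1)) (j+1) := by
  have key : ∀ p n : ℕ, G ((p:ℝ), (n:ℝ)+1) = H p (n+1) := by
    intro p n
    rw [show ((n:ℝ)+1) = ((n+1:ℕ):ℝ) from by push_cast; ring, hGH]
  rw [VV6]
  rw [Finset.sum_congr rfl (fun p _ => hGH p j), Finset.sum_congr rfl (fun q _ => key q j),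
    hGH 0 j, hGH (k-j-1+1) j, hGH (2*(k-j-1)+2) j, key 0 j, key (k-j-1) j, key (2*(k-j-1)) j]

noncomputable def H1 (g : ℝ × ℝ → ℝ) : ℕ → ℕ → ℝ := fun p n => g ((p:ℝ), (n:ℝ))
noncomputable def H2 (g : ℝ × ℝ → ℝ) : ℕ → ℕ → ℝ := fun p n => g (-(p:ℝ), (n:ℝ))
noncomputable def H3 (g : ℝ × ℝ → ℝ) : ℕ → ℕ → ℝ := fun p n => g ((p:ℝ), -(n:ℝ))
noncomputable def H4 (g : ℝ × ℝ → ℝ) : ℕ → ℕ → ℝ := fun p n => g (-(p:ℝ), -(n:ℝ))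

lemma inner_split (kq : ℕ) (f : ℝ → ℝ) :
    ∑ m ∈ Finset.Icc (-(2*(kq:ℤ))) (2*(kq:ℤ)), f (m:ℝ)
      = (∑ p ∈ Finset.range (2*kq+1), f (p:ℝ))
        + (∑ p ∈ Finset.range (2*kq+1), f (-(p:ℝ))) - f 0 := by
  have h := Icc_sum_split (fun m : ℤ => f ((m:ℤ):ℝ)) (2*kq)
  rw [show ((2*kq:ℕ):ℤ) = 2*(kq:ℤ) from by push_cast; ring] at h
  push_cast at h
  exact h



lemma abs_natCast_int (q : ℕ) : |(q:ℤ)| = (q:ℤ) := abs_of_nonneg (Int.natCast_nonneg q)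

lemma Sfull_eq (k : ℕ) (g : ℝ × ℝ → ℝ) :
    Sfull k g = ((∑ n ∈ Finset.range (k+1), TT k (H1 g) n)
        + (∑ n ∈ Finset.range (k+1), TT k (H2 g) n)
        + (∑ n ∈ Finset.range (k+1), TT k (H3 g) n)
        + (∑ n ∈ Finset.range (k+1), TT k (H4 g) n))
      - (∑ n ∈ Finset.range (k+1), H1 g 0 n) - (∑ n ∈ Finset.range (k+1), H3 g 0 n)
      - TT k (H1 g) 0 - TT k (H2 g) 0 + g ((0:ℝ), (0:ℝ)) := by
  rw [Sfull, Icc_sum_split (fun n : ℤ =>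
    ∑ m ∈ Finset.Icc (-(w k n)) (w k n), g ((m : ℝ), (n : ℝ))) k]
  have hA : ∀ q ∈ Finset.range (k+1),
      (∑ m ∈ Finset.Icc (-(w k ((q:ℕ):ℤ))) (w k ((q:ℕ):ℤ)), g ((m : ℝ), (((q:ℕ):ℤ) : ℝ)))
        = TT k (H1 g) q + TT k (H2 g) q - H1 g 0 q := by
    intro q hq
    have hq' := Finset.mem_range.mp hq
    have hw : w k ((q:ℕ):ℤ) = 2*((k-q:ℕ):ℤ) := by
      rw [w, abs_natCast_int]; push_cast; omega
    rw [hw, inner_split (k-q) (fun x => g (x, (((q:ℕ):ℤ):ℝ)))]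
    simp only [TT, H1, H2]
    push_cast
    ring
  have hB : ∀ q ∈ Finset.range (k+1),
      (∑ m ∈ Finset.Icc (-(w k (-((q:ℕ):ℤ)))) (w k (-((q:ℕ):ℤ))),
          g ((m : ℝ), (Int.cast (-((q:ℕ):ℤ)) : ℝ)))
        = TT k (H3 g) q + TT k (H4 g) q - H3 g 0 q := by
    intro q hq
    have hq' := Finset.mem_range.mp hq
    have hw : w k (-((q:ℕ):ℤ)) = 2*((k-q:ℕ):ℤ) := by
      rw [w, abs_neg, abs_natCast_int]; push_cast; omega
    rw [hw, inner_split (k-q) (fun x => g (x, (Int.cast (-((q:ℕ):ℤ)) : ℝ)))]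
    simp only [TT, H3, H4]
    push_cast
    ring
  have hC : (∑ m ∈ Finset.Icc (-(w k (0:ℤ))) (w k (0:ℤ)), g ((m : ℝ), ((0:ℤ) : ℝ)))
      = TT k (H1 g) 0 + TT k (H2 g) 0 - g ((0:ℝ), (0:ℝ)) := by
    have hw : w k (0:ℤ) = 2*((k-0:ℕ):ℤ) := by
      rw [w, abs_zero]; push_cast; omega
    rw [hw, inner_split (k-0) (fun x => g (x, ((0:ℤ):ℝ)))]
    simp only [TT, H1, H2]
    push_cast
    ring
  rw [Finset.sum_congr rfl hA, Finset.sum_congr rfl hB, hC,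
    Finset.sum_sub_distrib, Finset.sum_add_distrib, Finset.sum_sub_distrib,
    Finset.sum_add_distrib]
  ring

lemma Sbd_eq (k : ℕ) (hk : 1 ≤ k) (g : ℝ × ℝ → ℝ) :
    Sbd k g = ((∑ n ∈ Finset.range (k+1), H1 g (2*(k-n)) n)
        + (∑ n ∈ Finset.range (k+1), H2 g (2*(k-n)) n)
        + (∑ n ∈ Finset.range (k+1), H3 g (2*(k-n)) n)
        + (∑ n ∈ Finset.range (k+1), H4 g (2*(k-n)) n))
      - g ((0:ℝ), (k:ℝ)) - g ((0:ℝ), -(k:ℝ))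
      - g ((2*(k:ℝ)), (0:ℝ)) - g (-(2*(k:ℝ)), (0:ℝ)) := by
  rw [Sbd, Icc_sum_split (fun n : ℤ =>
    ∑ m ∈ ({-(w k n), w k n} : Finset ℤ), g ((m : ℝ), (n : ℝ))) k]
  have hA : ∀ q ∈ Finset.range k,
      (∑ m ∈ ({-(w k ((q:ℕ):ℤ)), w k ((q:ℕ):ℤ)} : Finset ℤ), g ((m : ℝ), (((q:ℕ):ℤ) : ℝ)))
        = H2 g (2*(k-q)) q + H1 g (2*(k-q)) q := by
    intro q hq
    have hq' := Finset.mem_range.mp hq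
    have hw : w k ((q:ℕ):ℤ) = 2*((k-q:ℕ):ℤ) := by
      rw [w, abs_natCast_int]; push_cast; omega
    have hne : -(w k ((q:ℕ):ℤ)) ≠ w k ((q:ℕ):ℤ) := by rw [hw]; push_cast; omega
    rw [Finset.sum_pair hne, hw]
    simp only [H1, H2]
    push_cast
    ring
  have hB : ∀ q ∈ Finset.range k,
      (∑ m ∈ ({-(w k (-((q:ℕ):ℤ))), w k (-((q:ℕ):ℤ))} : Finset ℤ),
          g ((m : ℝ), (Int.cast (-((q:ℕ):ℤ)) : ℝ)))
        = H4 g (2*(k-q)) q + H3 g (2*(k-q)) q := by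
    intro q hq
    have hq' := Finset.mem_range.mp hq
    have hw : w k (-((q:ℕ):ℤ)) = 2*((k-q:ℕ):ℤ) := by
      rw [w, abs_neg, abs_natCast_int]; push_cast; omega
    have hne : -(w k (-((q:ℕ):ℤ))) ≠ w k (-((q:ℕ):ℤ)) := by rw [hw]; push_cast; omega
    rw [Finset.sum_pair hne, hw]
    simp only [H3, H4]
    push_cast
    ring
  have hwk : w k ((k:ℕ):ℤ) = 0 := by
    rw [w, abs_natCast_int]; omega
  have hwkneg : w k (-((k:ℕ):ℤ)) = 0 := by
    rw [w, abs_neg, abs_natCast_int]; omega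
  have hK : (∑ m ∈ ({-(w k ((k:ℕ):ℤ)), w k ((k:ℕ):ℤ)} : Finset ℤ),
        g ((m : ℝ), (((k:ℕ):ℤ) : ℝ))) = g ((0:ℝ), (k:ℝ)) := by
    rw [hwk]
    norm_num
  have hKneg : (∑ m ∈ ({-(w k (-((k:ℕ):ℤ))), w k (-((k:ℕ):ℤ))} : Finset ℤ),
        g ((m : ℝ), (Int.cast (-((k:ℕ):ℤ)) : ℝ))) = g ((0:ℝ), -(k:ℝ)) := by
    rw [hwkneg]
    norm_num
  have h0 : (∑ m ∈ ({-(w k (0:ℤ)), w k (0:ℤ)} : Finset ℤ), g ((m : ℝ), ((0:ℤ) : ℝ)))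
      = g (-(2*(k:ℝ)), (0:ℝ)) + g ((2*(k:ℝ)), (0:ℝ)) := by
    have hw0 : w k (0:ℤ) = 2*(k:ℤ) := by rw [w, abs_zero]; ring
    have hne : -(w k (0:ℤ)) ≠ w k (0:ℤ) := by rw [hw0]; omega
    rw [Finset.sum_pair hne, hw0]
    push_cast
    ring_nf
  -- split the two outer sums at q = k
  rw [Finset.sum_range_succ (fun q =>
      (∑ m ∈ ({-(w k ((q:ℕ):ℤ)), w k ((q:ℕ):ℤ)} : Finset ℤ), g ((m : ℝ), (((q:ℕ):ℤ) : ℝ)))) k]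
  rw [Finset.sum_range_succ (fun q =>
      (∑ m ∈ ({-(w k (-((q:ℕ):ℤ))), w k (-((q:ℕ):ℤ))} : Finset ℤ),
        g ((m : ℝ), (Int.cast (-((q:ℕ):ℤ)) : ℝ)))) k]
  rw [Finset.sum_congr rfl hA, Finset.sum_congr rfl hB, hK, hKneg, h0,
    Finset.sum_add_distrib, Finset.sum_add_distrib]
  have hr1 : ∀ (HH : ℕ → ℕ → ℝ), ∑ n ∈ Finset.range (k+1), HH (2*(k-n)) n
      = (∑ n ∈ Finset.range k, HH (2*(k-n)) n) + HH 0 k := by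
    intro HH
    rw [Finset.sum_range_succ, show 2*(k-k) = 0 from by omega]
  rw [hr1 (H1 g), hr1 (H2 g), hr1 (H3 g), hr1 (H4 g)]
  have e1 : H1 g 0 k = g ((0:ℝ), (k:ℝ)) := by simp [H1]
  have e2 : H2 g 0 k = g ((0:ℝ), (k:ℝ)) := by simp [H2]
  have e3 : H3 g 0 k = g ((0:ℝ), -(k:ℝ)) := by simp [H3]
  have e4 : H4 g 0 k = g ((0:ℝ), -(k:ℝ)) := by simp [H4]
  rw [e1, e2, e3, e4]
  ring



lemma grand (k : ℕ) (hk : 1 ≤ k) (g : ℝ × ℝ → ℝ) :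
    ∑ j ∈ Finset.range k,
      ((∑ r ∈ Finset.range (4*((k-j-1)+1)-2), Wint g j ((k-j-1)+1) r)
        + (∑ r ∈ Finset.range (4*((k-j-1)+1)-2), Wint (g2 g) j ((k-j-1)+1) r)
        + ((∑ r ∈ Finset.range (4*((k-j-1)+1)-2), Wint (g3 g) j ((k-j-1)+1) r)
          + (∑ r ∈ Finset.range (4*((k-j-1)+1)-2), Wint (g4 g) j ((k-j-1)+1) r)))
    = Sfull k g - ((1/2)*Sbd k g - (1/6)*(g ((0:ℝ), (k:ℝ)) + g ((0:ℝ), -(k:ℝ)))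
        + (1/6)*(g ((2*(k:ℝ)), (0:ℝ)) + g (-(2*(k:ℝ)), (0:ℝ)))
        + (1/3)*(g ((k:ℝ), (0:ℝ)) + g (-(k:ℝ), (0:ℝ))) + (1/3)*g ((0:ℝ), (0:ℝ))) := by
  have hGH1 : ∀ p n : ℕ, g ((p:ℝ), (n:ℝ)) = H1 g p n := fun p n => rfl
  have hGH2 : ∀ p n : ℕ, (g2 g) ((p:ℝ), (n:ℝ)) = H2 g p n := fun p n => rfl
  have hGH3 : ∀ p n : ℕ, (g3 g) ((p:ℝ), (n:ℝ)) = H3 g p n := fun p n => rfl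
  have hGH4 : ∀ p n : ℕ, (g4 g) ((p:ℝ), (n:ℝ)) = H4 g p n := fun p n => rfl
  have hstep : ∀ j ∈ Finset.range k,
      ((∑ r ∈ Finset.range (4*((k-j-1)+1)-2), Wint g j ((k-j-1)+1) r)
        + (∑ r ∈ Finset.range (4*((k-j-1)+1)-2), Wint (g2 g) j ((k-j-1)+1) r)
        + ((∑ r ∈ Finset.range (4*((k-j-1)+1)-2), Wint (g3 g) j ((k-j-1)+1) r)
          + (∑ r ∈ Finset.range (4*((k-j-1)+1)-2), Wint (g4 g) j ((k-j-1)+1) r)))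
      = (1/6) * ((3*(∑ p ∈ Finset.range (2*(k-j-1)+3), H1 g p j)
            + 3*(∑ q ∈ Finset.range (2*(k-j-1)+1), H1 g q (j+1))
            - 2*H1 g 0 j - H1 g (k-j-1+1) j - 2*H1 g (2*(k-j-1)+2) j
            - H1 g 0 (j+1) + H1 g (k-j-1) (j+1) - H1 g (2*(k-j-1)) (j+1))
          + (3*(∑ p ∈ Finset.range (2*(k-j-1)+3), H2 g p j)
            + 3*(∑ q ∈ Finset.range (2*(k-j-1)+1), H2 g q (j+1))
            - 2*H2 g 0 j - H2 g (k-j-1+1) j - 2*H2 g (2*(k-j-1)+2) j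
            - H2 g 0 (j+1) + H2 g (k-j-1) (j+1) - H2 g (2*(k-j-1)) (j+1))
          + ((3*(∑ p ∈ Finset.range (2*(k-j-1)+3), H3 g p j)
            + 3*(∑ q ∈ Finset.range (2*(k-j-1)+1), H3 g q (j+1))
            - 2*H3 g 0 j - H3 g (k-j-1+1) j - 2*H3 g (2*(k-j-1)+2) j
            - H3 g 0 (j+1) + H3 g (k-j-1) (j+1) - H3 g (2*(k-j-1)) (j+1))
          + (3*(∑ p ∈ Finset.range (2*(k-j-1)+3), H4 g p j)
            + 3*(∑ q ∈ Finset.range (2*(k-j-1)+1), H4 g q (j+1))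
            - 2*H4 g 0 j - H4 g (k-j-1+1) j - 2*H4 g (2*(k-j-1)+2) j
            - H4 g 0 (j+1) + H4 g (k-j-1) (j+1) - H4 g (2*(k-j-1)) (j+1)))) := by
    intro j _
    rw [sum_Wint_VV6 g j (k-j-1), sum_Wint_VV6 (g2 g) j (k-j-1),
      sum_Wint_VV6 (g3 g) j (k-j-1), sum_Wint_VV6 (g4 g) j (k-j-1),
      VV6_eq_rows g (H1 g) hGH1 k j, VV6_eq_rows (g2 g) (H2 g) hGH2 k j,
      VV6_eq_rows (g3 g) (H3 g) hGH3 k j, VV6_eq_rows (g4 g) (H4 g) hGH4 k j]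
    ring
  rw [Finset.sum_congr rfl hstep, ← Finset.mul_sum, Finset.sum_add_distrib,
    Finset.sum_add_distrib, Finset.sum_add_distrib,
    global_rows k hk (H1 g), global_rows k hk (H2 g), global_rows k hk (H3 g),
    global_rows k hk (H4 g)]
  have hSf := Sfull_eq k g
  have hSb := Sbd_eq k hk g
  -- normalizations
  have n1 : TT k (H3 g) 0 = TT k (H1 g) 0 := by
    apply Finset.sum_congr rfl
    intro p _
    simp [H1, H3]
  have n2 : TT k (H4 g) 0 = TT k (H2 g) 0 := by
    apply Finset.sum_congr rfl
    intro p _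
    simp [H2, H4]
  have n3 : (∑ n ∈ Finset.range (k+1), H2 g 0 n) = ∑ n ∈ Finset.range (k+1), H1 g 0 n := by
    apply Finset.sum_congr rfl
    intro n _
    simp [H1, H2]
  have n4 : (∑ n ∈ Finset.range (k+1), H4 g 0 n) = ∑ n ∈ Finset.range (k+1), H3 g 0 n := by
    apply Finset.sum_congr rfl
    intro n _
    simp [H3, H4]
  have c1 : H1 g 0 k = g ((0:ℝ), (k:ℝ)) := by simp [H1]
  have c2 : H2 g 0 k = g ((0:ℝ), (k:ℝ)) := by simp [H2]
  have c3 : H3 g 0 k = g ((0:ℝ), -(k:ℝ)) := by simp [H3]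
  have c4 : H4 g 0 k = g ((0:ℝ), -(k:ℝ)) := by simp [H4]
  have d1 : H1 g 0 0 = g ((0:ℝ), (0:ℝ)) := by simp [H1]
  have d2 : H2 g 0 0 = g ((0:ℝ), (0:ℝ)) := by simp [H2]
  have d3 : H3 g 0 0 = g ((0:ℝ), (0:ℝ)) := by simp [H3]
  have d4 : H4 g 0 0 = g ((0:ℝ), (0:ℝ)) := by simp [H4]
  have f1 : H1 g k 0 = g ((k:ℝ), (0:ℝ)) := by simp [H1]
  have f2 : H2 g k 0 = g (-(k:ℝ), (0:ℝ)) := by simp [H2]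
  have f3 : H3 g k 0 = g ((k:ℝ), (0:ℝ)) := by simp [H3]
  have f4 : H4 g k 0 = g (-(k:ℝ), (0:ℝ)) := by simp [H4]
  have j1 : H1 g (2*k) 0 = g ((2*(k:ℝ)), (0:ℝ)) := by simp [H1]
  have j2 : H2 g (2*k) 0 = g (-(2*(k:ℝ)), (0:ℝ)) := by simp [H2]
  have j3 : H3 g (2*k) 0 = g ((2*(k:ℝ)), (0:ℝ)) := by simp [H3]
  have j4 : H4 g (2*k) 0 = g (-(2*(k:ℝ)), (0:ℝ)) := by simp [H4]
  rw [n1, n2, n3, n4, c1, c2, c3, c4, d1, d2, d3, d4, f1, f2, f3, f4, j1, j2, j3, j4] at *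
  linarith




end SubX2

/-- Subdivision estimate for `kΔ₂`: for a continuous concave `g` on `kΔ₂`,
`Σ_{lattice} g − ∫_{kΔ₂} g ≤ (1/2) Σ_{boundary lattice} g − (1/6)(g(0,k)+g(0,-k))
 + (1/6)(g(2k,0)+g(-2k,0)) + (1/3)(g(k,0)+g(-k,0)) + (1/3) g(0,0)`. -/
theorem subdivision_estimate_X2 (k : ℕ) (hk : 1 ≤ k) (g : ℝ × ℝ → ℝ)
    (hg : ContinuousOn g ((k : ℝ) • Δ₂)) (hconc : ConcaveOn ℝ ((k : ℝ) • Δ₂) g) :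
    (∑ᶠ p ∈ ((k : ℝ) • Δ₂) ∩ lat, g p) - (∫ x in (k : ℝ) • Δ₂, g x) ≤
      (1 / 2) * (∑ᶠ p ∈ frontier ((k : ℝ) • Δ₂) ∩ lat, g p)
        - (1 / 6) * (g ((0 : ℝ), (k : ℝ)) + g ((0 : ℝ), -(k : ℝ)))
        + (1 / 6) * (g ((2 * k : ℝ), (0 : ℝ)) + g ((-(2 * (k : ℝ))), (0 : ℝ)))
        + (1 / 3) * (g ((k : ℝ), (0 : ℝ)) + g ((-(k : ℝ)), (0 : ℝ)))
        + (1 / 3) * g ((0 : ℝ), (0 : ℝ)) := by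
  have hP : (k:ℝ) • Δ₂ = SubX2.P (k:ℝ) := SubX2.smul_hull_eq (k:ℝ) (Nat.cast_nonneg k)
  rw [hP] at hg hconc ⊢
  rw [SubX2.frontier_P (k:ℝ) (by exact_mod_cast Nat.pos_of_ne_zero (by omega))]
  rw [SubX2.finsum_full k g, SubX2.finsum_bd k g hk]
  have hF := SubX2.fubini k g hg
  have hT := SubX2.FF_total k g hg
  have hs : ∀ j ∈ Finset.range k,
      ((∑ r ∈ Finset.range (4*((k-j-1)+1)-2), SubX2.Wint g j ((k-j-1)+1) r)
        + (∑ r ∈ Finset.range (4*((k-j-1)+1)-2), SubX2.Wint (SubX2.g2 g) j ((k-j-1)+1) r)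
        + ((∑ r ∈ Finset.range (4*((k-j-1)+1)-2), SubX2.Wint (SubX2.g3 g) j ((k-j-1)+1) r)
          + (∑ r ∈ Finset.range (4*((k-j-1)+1)-2), SubX2.Wint (SubX2.g4 g) j ((k-j-1)+1) r)))
      ≤ (∫ y in (j:ℝ)..((j:ℝ)+1), SubX2.FF k g y)
          + ∫ y in (-(j:ℝ)-1)..(-(j:ℝ)), SubX2.FF k g y := by
    intro j hj
    exact SubX2.strip_lower k g hg hconc j (k-j-1) (by have := Finset.mem_range.mp hj; omega)
  have hsum := Finset.sum_le_sum hs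
  rw [SubX2.grand k hk g] at hsum
  linarith
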